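/- arXiv:2106.15486 — 5 statements merged into one kernel-verified Lean document; each statement's English description precedes it below -/
import Mathlib

section
/- Let 𝒪 be a discrete valuation ring with maximal ideal generated by a uniformizer x and residue field F = 𝒪/x𝒪, let M be a finitely generated free 𝒪-module equipped with a non-degenerate symmetric bilinear form ⟨ , ⟩ : M × M → 𝒪, and let G be the Gram matrix of this form with respect to some basis. Define J_k(M) = {m ∈ M : ⟨m, u⟩ ∈ x^k 𝒪 for all u ∈ M} and J_k(M_F) = (J_k(M) + xM)/xM ⊆ M/xM. Then Σ_{k>0} dim_F J_k(M_F) = ν_x(det G), where ν_x is the valuation on 𝒪. -/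
open Finset Matrix

private lemma unit_mul_pow_le {R : Type*} [CommRing R] [IsDomain R] {x : R}
    (hx : Irreducible x) {u v : R} (hu : IsUnit u)
    {a b : ℕ} (h : u * x ^ a = v * x ^ b) (hab : a ≤ b) : a = b := by
  by_contra hne
  have hxa : x ^ a ≠ 0 := pow_ne_zero _ hx.ne_zero
  have h2 : u * x ^ a = v * x ^ (b - a) * x ^ a := by
    rw [h, mul_assoc, ← pow_add]
    congr 2
    omega
  have hu2 : u = v * x ^ (b - a) := mul_right_cancel₀ hxa h2
  have hdvd : x ∣ u :=
    hu2 ▸ dvd_mul_of_dvd_right (dvd_pow_self x (by omega : b - a ≠ 0)) v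
  exact hx.not_isUnit (isUnit_of_dvd_unit hdvd hu)

private lemma unit_mul_pow_inj {R : Type*} [CommRing R] [IsDomain R] {x : R}
    (hx : Irreducible x) {u v : R} (hu : IsUnit u) (hv : IsUnit v)
    {a b : ℕ} (h : u * x ^ a = v * x ^ b) : a = b := by
  rcases le_total a b with hab | hab
  · exact unit_mul_pow_le hx hu h hab
  · exact (unit_mul_pow_le hx hv h.symm hab).symm

private lemma coords_mem_span {R : Type*} [CommRing R] {ι : Type*} [Fintype ι] [DecidableEq ι]
    (b : Module.Basis ι R (ι → R)) (y : R) (v : ι → R) :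
    (∀ j, v j ∈ Ideal.span {y}) ↔ ∀ i, b.equivFun v i ∈ Ideal.span {y} := by
  simp only [Ideal.mem_span_singleton]
  constructor
  · intro h i
    choose w hw using h
    have hv : v = y • w := funext fun j => by rw [hw j]; rfl
    refine ⟨b.equivFun w i, ?_⟩
    rw [hv, _root_.map_smul]
    rfl
  · intro h j
    choose c hc using h
    have hv : v = y • b.equivFun.symm c := by
      have : b.equivFun v = y • c := funext fun i => by rw [hc i]; rfl
      calc v = b.equivFun.symm (b.equivFun v) := (b.equivFun.symm_apply_apply v).symm
        _ = y • b.equivFun.symm c := by rw [this, _root_.map_smul]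
    exact ⟨b.equivFun.symm c j, by rw [hv]; rfl⟩

private lemma unit_pow_mem_span_iff {R : Type*} [CommRing R] [IsDomain R] {x : R}
    (hx : Irreducible x) {w : R} (hw : IsUnit w) (ti k : ℕ) (c : R) :
    w * x ^ ti * c ∈ Ideal.span {x ^ (k + 1)} ↔ c ∈ Ideal.span {x ^ (k + 1 - ti)} := by
  rw [Ideal.mem_span_singleton, Ideal.mem_span_singleton]
  have h1 : x ^ (k+1) ∣ w * x ^ ti * c ↔ x ^ (k+1) ∣ x ^ ti * c := by
    rw [mul_assoc, mul_comm w]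
    exact hw.dvd_mul_right
  rw [h1]
  rcases le_or_gt (k+1) ti with h | h
  · have : k + 1 - ti = 0 := by omega
    rw [this, pow_zero]
    exact iff_of_true (Dvd.dvd.mul_right (pow_dvd_pow x h) c) (one_dvd c)
  · have hsplit : x ^ ti * x ^ (k + 1 - ti) = x ^ (k+1) := by rw [← pow_add]; congr 1; omega
    rw [← hsplit]
    exact mul_dvd_mul_iff_left (pow_ne_zero ti hx.ne_zero)

/-- Jantzen's lemma over a discrete valuation ring 𝒪 with uniformizer x and residue field
F = 𝒪/(x): let M = 𝒪^ι carry a non-degenerate symmetric bilinear form B with Gram matrix G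
and ν_x(det G) = N (i.e. det G = u·x^N with u a unit).  With
J_k(M) = {m : ⟨m,u⟩ ∈ x^k𝒪 ∀ u} and J_k(M_F) the image of J_k(M) in M/xM ≅ F^ι, we have
Σ_{k>0} dim_F J_k(M_F) = ν_x(det G). -/
theorem jantzen_sum_dim_eq_valuation {𝒪 : Type*} [CommRing 𝒪] [IsDomain 𝒪]
    [IsDiscreteValuationRing 𝒪] (x : 𝒪) (hx : Irreducible x)
    {ι : Type*} [Fintype ι] [DecidableEq ι]
    (B : (ι → 𝒪) →ₗ[𝒪] (ι → 𝒪) →ₗ[𝒪] 𝒪)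
    (hsymm : ∀ m u, B m u = B u m)
    (G : Matrix ι ι 𝒪) (hG : ∀ i j, G i j = B (Pi.single i 1) (Pi.single j 1))
    (N : ℕ) (u : 𝒪) (hu : IsUnit u) (hdet : G.det = u * x ^ N) :
    ∑' k : ℕ, Module.finrank (𝒪 ⧸ Ideal.span {x})
        (Submodule.span (𝒪 ⧸ Ideal.span {x})
          ((fun m : ι → 𝒪 => fun i => Ideal.Quotient.mk (Ideal.span {x}) (m i)) ''
            {m : ι → 𝒪 | ∀ v : ι → 𝒪, B m v ∈ Ideal.span {x} ^ (k + 1)})) = N := by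
  classical
  haveI hmax : (Ideal.span {x}).IsMaximal := PrincipalIdealRing.isMaximal_of_irreducible hx
  set F := 𝒪 ⧸ Ideal.span {x} with hF
  set π : 𝒪 →+* F := Ideal.Quotient.mk (Ideal.span {x}) with hπ
  set ψ : (ι → 𝒪) → (ι → F) := fun m => fun i => π (m i) with hψdef
  set L : (ι → 𝒪) →ₗ[𝒪] (ι → 𝒪) := Matrix.toLin' G.transpose with hLdef
  have hLapp : ∀ m, L m = G.transpose.mulVec m := fun m => Matrix.toLin'_apply _ _
  have hdetG : G.det ≠ 0 := by
    rw [hdet]; exact mul_ne_zero hu.ne_zero (pow_ne_zero _ hx.ne_zero)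
  -- injectivity of L
  have hLinj : Function.Injective L := by
    rw [← LinearMap.ker_eq_bot, LinearMap.ker_eq_bot']
    intro m hm
    rw [hLapp] at hm
    have h0 : G.transpose.det • m = 0 := by
      calc G.transpose.det • m = (G.transpose.det • (1 : Matrix ι ι 𝒪)) *ᵥ m := by
            rw [Matrix.smul_mulVec, Matrix.one_mulVec]
        _ = (G.transpose.adjugate * G.transpose) *ᵥ m := by rw [Matrix.adjugate_mul]
        _ = G.transpose.adjugate *ᵥ (G.transpose *ᵥ m) := (Matrix.mulVec_mulVec _ _ _).symm
        _ = 0 := by rw [hm, Matrix.mulVec_zero]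
    funext j
    have hj := congrFun h0 j
    simp only [Pi.smul_apply, smul_eq_mul, Pi.zero_apply] at hj ⊢
    rw [Matrix.det_transpose] at hj
    exact (mul_eq_zero.1 hj).resolve_left hdetG
  -- expansion of vectors in the standard basis
  have hexp : ∀ m : ι → 𝒪, m = ∑ i, m i • (Pi.single i 1 : ι → 𝒪) := by
    intro m
    funext j
    rw [Finset.sum_apply]
    simp [Pi.single_apply]
  -- B against standard basis vectors computes L
  have hBL : ∀ (m : ι → 𝒪) (j : ι), B m (Pi.single j 1) = L m j := by
    intro m j
    rw [hLapp]
    conv_lhs => rw [hexp m, map_sum]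
    rw [LinearMap.sum_apply]
    simp only [_root_.map_smul, LinearMap.smul_apply, smul_eq_mul]
    simp only [← hG]
    simp [Matrix.mulVec, dotProduct, Matrix.transpose_apply, mul_comm]
  have hBiff : ∀ (k : ℕ) (m : ι → 𝒪),
      (∀ v, B m v ∈ Ideal.span {x ^ (k+1)}) ↔ ∀ j, L m j ∈ Ideal.span {x ^ (k+1)} := by
    intro k m
    constructor
    · intro h j
      rw [← hBL]
      exact h _
    · intro h v
      have hv : B m v = ∑ j, v j * B m (Pi.single j 1) := by
        conv_lhs => rw [hexp v, map_sum]
        simp only [_root_.map_smul, LinearMap.smul_apply, smul_eq_mul]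
      rw [hv]
      exact Ideal.sum_mem _ fun j _ =>
        Ideal.mul_mem_left _ _ (by rw [hBL]; exact h j)
  -- Smith normal form of the range of L
  obtain ⟨n, bM, bW, f, a, hsnf⟩ :=
    Submodule.smithNormalForm (Pi.basisFun 𝒪 ι) (LinearMap.range L)
  have hcard : n = Fintype.card ι := by
    have e1 : (ι → 𝒪) ≃ₗ[𝒪] LinearMap.range L := LinearEquiv.ofInjective L hLinj
    have h1 : Module.finrank 𝒪 (LinearMap.range L) = Fintype.card ι := by
      rw [← e1.finrank_eq, Module.finrank_fintype_fun_eq_card]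
    have h2 : Module.finrank 𝒪 (LinearMap.range L) = n := by
      rw [Module.finrank_eq_card_basis bW, Fintype.card_fin]
    omega
  have hbij : Function.Bijective f :=
    (Fintype.bijective_iff_injective_and_card f).2 ⟨f.injective, by simp [hcard]⟩
  set σ : Fin n ≃ ι := Equiv.ofBijective f hbij with hσ
  set d : ι → 𝒪 := fun i => a (σ.symm i) with hd_def
  have hd : ∀ i : ι, ((bW (σ.symm i) : ι → 𝒪)) = d i • bM i := by
    intro i
    have h := hsnf (σ.symm i)
    have hfi : f (σ.symm i) = i := σ.apply_symm_apply i
    rw [hfi] at h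
    exact h
  have hd0 : ∀ i, d i ≠ 0 := by
    intro i h
    apply bW.ne_zero (σ.symm i)
    have : ((bW (σ.symm i) : ι → 𝒪)) = 0 := by rw [hd i, h, zero_smul]
    exact Subtype.ext this
  choose t w hw using fun i => IsDiscreteValuationRing.eq_unit_mul_pow_irreducible (hd0 i) hx
  -- change of coordinates
  set E : (ι → 𝒪) ≃ₗ[𝒪] (ι → 𝒪) :=
    (LinearEquiv.ofInjective L hLinj).trans
      (bW.equivFun.trans (LinearEquiv.funCongrLeft 𝒪 𝒪 σ.symm)) with hEdef
  have hE : ∀ m i, E m i = bW.equivFun (LinearEquiv.ofInjective L hLinj m) (σ.symm i) :=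
    fun m i => rfl
  have key : ∀ m, L m = ∑ i, (d i * E m i) • bM i := by
    intro m
    have h1 : L m = ((LinearEquiv.ofInjective L hLinj m : LinearMap.range L) : ι → 𝒪) := by
      rw [LinearEquiv.ofInjective_apply]
    set wv := LinearEquiv.ofInjective L hLinj m with hwv
    have h2 : ((wv : LinearMap.range L) : ι → 𝒪)
        = ∑ i' : Fin n, bW.equivFun wv i' • ((bW i' : ι → 𝒪)) := by
      conv_lhs => rw [← bW.sum_equivFun wv]
      rw [Submodule.coe_sum]
      rfl
    rw [h1, h2, ← Equiv.sum_comp σ.symm (fun i' => bW.equivFun wv i' • ((bW i' : ι → 𝒪)))]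
    refine Finset.sum_congr rfl fun i _ => ?_
    rw [hd i, smul_smul, mul_comm]
    rfl
  have memJ : ∀ (k : ℕ) (m : ι → 𝒪),
      (∀ v, B m v ∈ Ideal.span {x} ^ (k + 1)) ↔
        ∀ i, E m i ∈ Ideal.span {x ^ (k + 1 - t i)} := by
    intro k m
    rw [Ideal.span_singleton_pow, hBiff k m, coords_mem_span bM (x ^ (k+1)) (L m)]
    have hco : ∀ i, bM.equivFun (L m) i = d i * E m i := by
      intro i
      have h1 : (∑ i, (d i * E m i) • bM i) = bM.equivFun.symm (fun i => d i * E m i) :=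
        (bM.equivFun_symm_apply _).symm
      rw [key m, h1, LinearEquiv.apply_symm_apply]
    refine forall_congr' fun i => ?_
    rw [hco i, hw i]
    exact unit_pow_mem_span_iff hx (w i).isUnit (t i) k (E m i)
  -- determinant computation
  have hsum : ∑ i, t i = N := by
    set E' : (ι → 𝒪) ≃ₗ[𝒪] (ι → 𝒪) := E.trans bM.equivFun.symm with hE'def
    have hLD : L = (Matrix.toLin bM bM (Matrix.diagonal d)).comp E'.toLinearMap := by
      apply LinearMap.ext
      intro m
      rw [key m]
      show _ = Matrix.toLin bM bM (Matrix.diagonal d) (bM.equivFun.symm (E m))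
      rw [bM.equivFun_symm_apply, map_sum]
      refine (Finset.sum_congr rfl fun i _ => ?_).symm
      rw [_root_.map_smul, Matrix.toLin_self]
      rw [Finset.sum_eq_single i (fun b _ hb => by
        rw [Matrix.diagonal_apply_ne _ hb, zero_smul]) (fun h => absurd (Finset.mem_univ i) h)]
      rw [Matrix.diagonal_apply_eq, smul_smul, mul_comm]
    have hdetL : LinearMap.det L = G.det := by
      rw [hLdef, LinearMap.det_toLin', Matrix.det_transpose]
    have hdet2 : LinearMap.det L = (∏ i, d i) * LinearMap.det E'.toLinearMap := by
      rw [hLD, LinearMap.det_comp, LinearMap.det_toLin, Matrix.det_diagonal]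
    have hunitE : IsUnit (LinearMap.det E'.toLinearMap) := E'.isUnit_det'
    obtain ⟨v0, hv0⟩ := hunitE
    have hprod : ∏ i, d i = (∏ i, (w i : 𝒪)) * x ^ (∑ i, t i) := by
      rw [← Finset.prod_pow_eq_pow_sum, ← Finset.prod_mul_distrib]
      exact Finset.prod_congr rfl fun i _ => hw i
    have hunitW : IsUnit (∏ i, (w i : 𝒪)) := by
      have h := (∏ i, w i).isUnit
      rwa [Units.coe_prod] at h
    have hfinal : u * x ^ N = ((∏ i, (w i : 𝒪)) * v0) * x ^ (∑ i, t i) := by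
      rw [← hdet, ← hdetL, hdet2, hprod, ← hv0]
      ring
    exact (unit_mul_pow_inj hx hu (hunitW.mul v0.isUnit) hfinal).symm
  -- the dimension computation for each k
  have claim : ∀ k : ℕ, Module.finrank F
      (Submodule.span F (ψ '' {m : ι → 𝒪 | ∀ v : ι → 𝒪, B m v ∈ Ideal.span {x} ^ (k + 1)}))
      = (univ.filter (fun i => k < t i)).card := by
    intro k
    haveI : Nontrivial F := Ideal.Quotient.nontrivial_iff.mpr hmax.ne_top
    set S : Set (ι → 𝒪) := {c | ∀ i, c i ∈ Ideal.span {x ^ (k + 1 - t i)}} with hS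
    have hJS : {m : ι → 𝒪 | ∀ v, B m v ∈ Ideal.span {x} ^ (k+1)} = ⇑E.symm '' S := by
      ext m
      simp only [Set.mem_setOf_eq, memJ k m, Set.mem_image]
      constructor
      · intro h
        exact ⟨E m, h, E.symm_apply_apply m⟩
      · rintro ⟨c, hc, rfl⟩ i
        rw [E.apply_symm_apply]
        exact hc i
    set Pm : Matrix ι ι 𝒪 := LinearMap.toMatrix' (E.symm : (ι → 𝒪) →ₗ[𝒪] (ι → 𝒪)) with hPm
    have hPmapp : ∀ c, E.symm c = Pm.mulVec c := by
      intro c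
      calc E.symm c = Matrix.toLin' Pm c := by rw [hPm, Matrix.toLin'_toMatrix']; rfl
        _ = Pm.mulVec c := Matrix.toLin'_apply _ _
    have hψcomm : ∀ c, ψ (E.symm c) = (Pm.map π).mulVec (ψ c) := by
      intro c
      funext i
      show π (E.symm c i) = _
      rw [hPmapp c]
      exact (RingHom.map_mulVec π Pm c i).trans rfl
    set Ψ : (ι → F) →ₗ[F] (ι → F) := Matrix.toLin' (Pm.map π) with hΨ
    have hdetPm : IsUnit Pm.det := by
      have h1 : Pm.det = LinearMap.det (E.symm : (ι → 𝒪) →ₗ[𝒪] (ι → 𝒪)) := by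
        rw [hPm, LinearMap.det_toMatrix']
      rw [h1]
      exact E.symm.isUnit_det'
    have hdetF : IsUnit ((Pm.map π).det) := by
      have hmd : (Pm.map π).det = π Pm.det := (RingHom.map_det π Pm).symm
      rw [hmd]
      exact hdetPm.map π
    have hΨinj : Function.Injective Ψ := by
      have hinv : (Pm.map π)⁻¹ * (Pm.map π) = 1 := Matrix.nonsing_inv_mul _ hdetF
      have hleft : ∀ y, (Pm.map π)⁻¹.mulVec (Ψ y) = y := by
        intro y
        rw [hΨ]
        show (Pm.map π)⁻¹ *ᵥ (Matrix.toLin' (Pm.map π) y) = y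
        rw [Matrix.toLin'_apply, Matrix.mulVec_mulVec, hinv, Matrix.one_mulVec]
      intro c c' hcc
      rw [← hleft c, ← hleft c', hcc]
    have hcomm2 : ψ ∘ ⇑E.symm = ⇑Ψ ∘ ψ := by
      funext c
      show ψ (E.symm c) = Ψ (ψ c)
      rw [hψcomm c, hΨ]
      exact (Matrix.toLin'_apply _ _).symm
    have himg : ψ '' {m : ι → 𝒪 | ∀ v, B m v ∈ Ideal.span {x} ^ (k+1)} = ⇑Ψ '' (ψ '' S) := by
      rw [hJS, ← Set.image_comp, hcomm2, Set.image_comp]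
    rw [himg, Submodule.span_image,
      ← LinearEquiv.finrank_eq (Submodule.equivMapOfInjective Ψ hΨinj (Submodule.span F (ψ '' S)))]
    have hspan : Submodule.span F (ψ '' S)
        = Submodule.span F ((fun i : ι => (Pi.single i 1 : ι → F)) '' {i | k < t i}) := by
      apply le_antisymm
      · rw [Submodule.span_le]
        rintro y ⟨c, hc, rfl⟩
        have hy : ψ c = ∑ i, (Pi.single i (ψ c i) : ι → F) := by
          funext j
          rw [Finset.sum_apply]
          simp [Pi.single_apply]
        rw [hy]
        apply Submodule.sum_mem
        intro i _
        by_cases hi : k < t i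
        · have hsingle : (Pi.single i (ψ c i) : ι → F) = ψ c i • (Pi.single i 1 : ι → F) := by
            rw [← Pi.single_smul, smul_eq_mul, mul_one]
          rw [hsingle]
          exact Submodule.smul_mem _ _ (Submodule.subset_span ⟨i, hi, rfl⟩)
        · have h0 : ψ c i = 0 := by
            have hci := hc i
            rw [Ideal.mem_span_singleton] at hci
            have hxdvd : x ∣ c i :=
              dvd_trans (dvd_pow_self x (by omega : k + 1 - t i ≠ 0)) hci
            show π (c i) = 0
            rw [hπ, Ideal.Quotient.eq_zero_iff_mem]
            exact Ideal.mem_span_singleton.2 hxdvd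
          rw [h0, Pi.single_zero]
          exact Submodule.zero_mem _
      · rw [Submodule.span_le]
        rintro y ⟨i, hi, rfl⟩
        apply Submodule.subset_span
        refine ⟨Pi.single i 1, fun i' => ?_, ?_⟩
        · by_cases hii : i' = i
          · subst hii
            rw [Pi.single_eq_same]
            have hti : k + 1 - t i' = 0 := by
              have : k < t i' := hi
              omega
            rw [hti, pow_zero]
            exact Ideal.mem_span_singleton.2 (one_dvd _)
          · rw [Pi.single_eq_of_ne hii]
            exact (Ideal.span _).zero_mem
        · funext j
          have hψj : ψ (Pi.single i 1) j = π ((Pi.single i 1 : ι → 𝒪) j) := rfl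
          rw [hψj]
          show _ = (Pi.single i 1 : ι → F) j
          rcases eq_or_ne j i with h | h
          · subst h
            rw [Pi.single_eq_same, Pi.single_eq_same]
            exact map_one π
          · rw [Pi.single_eq_of_ne h, Pi.single_eq_of_ne h]
            exact map_zero π
    rw [hspan]
    have hli : LinearIndependent F (fun i : {i : ι // k < t i} => (Pi.single (i : ι) 1 : ι → F)) := by
      have h1 := (Pi.basisFun F ι).linearIndependent
      have h2 := h1.comp (fun i : {i : ι // k < t i} => (i : ι)) Subtype.val_injective
      have h3 : (⇑(Pi.basisFun F ι) ∘ fun i : {i : ι // k < t i} => (i : ι))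
          = fun i : {i : ι // k < t i} => (Pi.single (i : ι) 1 : ι → F) := by
        funext i
        simp only [Function.comp_apply]
        rw [Pi.basisFun_apply]
      rwa [h3] at h2
    have himg2 : ((fun i : ι => (Pi.single i 1 : ι → F)) '' {i | k < t i})
        = Set.range (fun i : {i : ι // k < t i} => (Pi.single (i : ι) 1 : ι → F)) := by
      rw [Set.image_eq_range]
      rfl
    rw [himg2, finrank_span_eq_card hli]
    simp [Fintype.card_subtype]
  -- summing up
  calc ∑' k : ℕ, Module.finrank F
        (Submodule.span F (ψ '' {m : ι → 𝒪 | ∀ v : ι → 𝒪, B m v ∈ Ideal.span {x} ^ (k + 1)}))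
      = ∑' k : ℕ, ((univ.filter (fun i => k < t i)).card : ℕ) := tsum_congr claim
    _ = N := by
        have htle : ∀ i, t i ≤ N := by
          intro i
          rw [← hsum]
          exact Finset.single_le_sum (fun j _ => Nat.zero_le _) (Finset.mem_univ i)
        have hzero : ∀ k : ℕ, k ∉ Finset.range N →
            ((univ.filter (fun i => k < t i)).card : ℕ) = 0 := by
          intro k hk
          rw [Finset.mem_range, not_lt] at hk
          rw [Finset.card_eq_zero, Finset.filter_eq_empty_iff]
          intro i _
          have := htle i
          omega
        rw [tsum_eq_sum hzero]
        have hcf : ∀ kk ∈ Finset.range N,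
            (univ.filter (fun i => kk < t i)).card = ∑ i, if kk < t i then 1 else 0 :=
          fun kk _ => Finset.card_filter _ _
        rw [Finset.sum_congr rfl hcf, Finset.sum_comm]
        have hinner : ∀ i, (∑ kk ∈ Finset.range N, if kk < t i then 1 else 0) = t i := by
          intro i
          have hfe : Finset.filter (fun kk => kk < t i) (Finset.range N) = Finset.range (t i) := by
            ext a
            simp only [Finset.mem_filter, Finset.mem_range]
            have := htle i
            omega
          calc (∑ kk ∈ Finset.range N, if kk < t i then 1 else 0)
              = (Finset.filter (fun kk => kk < t i) (Finset.range N)).card :=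
                (Finset.card_filter _ _).symm
            _ = t i := by rw [hfe, Finset.card_range]
        rw [Finset.sum_congr rfl (fun i _ => hinner i), hsum]
end

section
/- Let M be a finitely generated free ℤ-module with a non-degenerate symmetric bilinear form ⟨ , ⟩ : M × M → ℤ with Gram matrix G, let p be a prime, and define J_k(M) = {m ∈ M : ⟨m, u⟩ ∈ p^k ℤ for all u ∈ M} and J_k(M_{𝔽_p}) = (J_k(M) + pM)/pM. Then Σ_{k>0} dim_{𝔽_p} J_k(M_{𝔽_p}) = ν_p(det G), where ν_p is the p-adic valuation. -/
open Finset Module Submodule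

-- combinatorial tsum lemma
lemma jantzen_aux_tsum {ι : Type*} [Fintype ι] [DecidableEq ι] (ν : ι → ℕ) :
    ∑' k : ℕ, (Finset.univ.filter fun i : ι => k < ν i).card = ∑ i, ν i := by
  classical
  set K := ∑ i, ν i with hK
  have hνK : ∀ i, ν i ≤ K := fun i => Finset.single_le_sum (fun _ _ => Nat.zero_le _) (mem_univ i)
  have hz : ∀ k ∉ Finset.range K, (Finset.univ.filter fun i : ι => k < ν i).card = 0 := by
    intro k hk
    rw [Finset.mem_range, not_lt] at hk
    rw [Finset.card_eq_zero, Finset.filter_eq_empty_iff]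
    intro i _
    exact Nat.not_lt.mpr (le_trans (hνK i) hk)
  rw [tsum_eq_sum hz]
  have : ∀ k, (Finset.univ.filter fun i : ι => k < ν i).card
      = ∑ i, if k < ν i then 1 else 0 := fun k => Finset.card_filter _ _
  simp_rw [this]
  rw [Finset.sum_comm]
  refine Finset.sum_congr rfl fun i _ => ?_
  rw [← Finset.card_filter]
  have : Finset.filter (fun k => k < ν i) (Finset.range K) = Finset.range (ν i) := by
    ext x
    simp only [Finset.mem_filter, Finset.mem_range]
    constructor
    · rintro ⟨_, h⟩; exact h
    · intro h; exact ⟨lt_of_lt_of_le h (hνK i), h⟩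
  rw [this, Finset.card_range]

-- dimension of the image mod p of a set adapted to a basis
lemma jantzen_aux_dim (p : ℕ) (hp : p.Prime) {ι : Type*} [Fintype ι] [DecidableEq ι]
    (e : Basis ι ℤ (ι → ℤ)) (S : Set (ι → ℤ)) (s : Finset ι)
    (h1 : ∀ m ∈ S, ∀ i ∉ s, (p : ℤ) ∣ e.repr m i)
    (h2 : ∀ i ∈ s, e i ∈ S) :
    Module.finrank (ZMod p)
      (Submodule.span (ZMod p)
        ((fun m : ι → ℤ => fun i => ((m i : ℤ) : ZMod p)) '' S)) = s.card := by
  classical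
  haveI : Fact p.Prime := ⟨hp⟩
  set π : (ι → ℤ) → (ι → ZMod p) := fun m => fun i => ((m i : ℤ) : ZMod p) with hπ
  -- the matrix of e in the standard basis and its reduction
  set Q : Matrix ι ι ℤ := (Pi.basisFun ℤ ι).toMatrix e with hQ
  haveI : Invertible Q := (Pi.basisFun ℤ ι).invertibleToMatrix e
  set Qb : Matrix ι ι (ZMod p) := Q.map (Int.cast : ℤ → ZMod p) with hQb
  haveI : Invertible Qb := by
    have : Qb = (Int.castRingHom (ZMod p)).mapMatrix Q := rfl
    rw [this]
    exact Invertible.map ((Int.castRingHom (ZMod p)).mapMatrix.toMonoidHom) Q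
  set L : (ι → ZMod p) ≃ₗ[ZMod p] (ι → ZMod p) := Matrix.toLinearEquiv' Qb this with hL
  have hLe : ∀ i, L (Pi.single i 1) = π (e i) := by
    intro i
    funext j
    show (Qb.mulVec (Pi.single i 1)) j = ((e i j : ℤ) : ZMod p)
    rw [Matrix.mulVec_single]
    simp [hQb, hQ, Basis.toMatrix_apply, Pi.basisFun_repr]
  -- π as an ℤ-linear map
  set πL : (ι → ℤ) →ₗ[ℤ] (ι → ZMod p) :=
    LinearMap.pi (fun i =>
      ((Int.castRingHom (ZMod p)).toAddMonoidHom.toIntLinearMap).comp (LinearMap.proj i))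
    with hπL
  have hπLeq : ∀ m, πL m = π m := fun m => rfl
  have key : Submodule.span (ZMod p) (π '' S) =
      Submodule.map (L : (ι → ZMod p) →ₗ[ZMod p] (ι → ZMod p))
        (Submodule.span (ZMod p)
          (Set.range fun i : s => (Pi.single (i : ι) (1 : ZMod p) : ι → ZMod p))) := by
    apply le_antisymm
    · rw [Submodule.span_le]
      rintro x ⟨m, hm, rfl⟩
      set c : ι → ℤ := fun i => e.repr m i with hc
      set w : ι → ZMod p := ∑ i, ((c i : ℤ) : ZMod p) • (Pi.single i (1 : ZMod p) : ι → ZMod p) with hw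
      have hLw : L w = π m := by
        have hm' : m = ∑ i, c i • e i := (e.sum_repr m).symm
        calc L w = ∑ i, ((c i : ℤ) : ZMod p) • L (Pi.single i (1 : ZMod p)) := by
              rw [hw, map_sum]
              exact Finset.sum_congr rfl fun i _ => map_smul _ _ _
          _ = ∑ i, (c i) • π (e i) := by
              refine Finset.sum_congr rfl fun i _ => ?_
              rw [hLe, Int.cast_smul_eq_zsmul]
          _ = πL (∑ i, c i • e i) := by
              rw [map_sum]
              exact Finset.sum_congr rfl fun i _ => ((πL.map_smul (c i) (e i)).symm.trans rfl)
          _ = π m := by rw [← hm', hπLeq]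
      have hwmem : w ∈ Submodule.span (ZMod p)
          (Set.range fun i : s => (Pi.single (i : ι) (1 : ZMod p) : ι → ZMod p)) := by
        rw [hw]
        refine Submodule.sum_mem _ fun i _ => ?_
        by_cases his : i ∈ s
        · exact Submodule.smul_mem _ _ (Submodule.subset_span ⟨⟨i, his⟩, rfl⟩)
        · have : ((c i : ℤ) : ZMod p) = 0 :=
            (ZMod.intCast_zmod_eq_zero_iff_dvd _ _).mpr (h1 m hm i his)
          rw [this, zero_smul]
          exact Submodule.zero_mem _
      exact ⟨w, hwmem, hLw⟩
    · rw [Submodule.map_span]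
      apply Submodule.span_mono
      rintro x ⟨y, ⟨⟨i, his⟩, rfl⟩, rfl⟩
      exact ⟨e i, h2 i his, (hLe i).symm⟩
  rw [key, LinearEquiv.finrank_map_eq]
  have hli : LinearIndependent (ZMod p) (fun i : s => (Pi.single (i : ι) (1 : ZMod p) : ι → ZMod p)) := by
    have := (Pi.basisFun (ZMod p) ι).linearIndependent
    have h2' : (fun i : s => (Pi.single (i : ι) (1 : ZMod p) : ι → ZMod p)) =
        (Pi.basisFun (ZMod p) ι) ∘ (fun i : s => (i : ι)) := by
      funext i; simp [Pi.basisFun_apply]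
    rw [h2']
    exact this.comp _ Subtype.val_injective
  rw [finrank_span_eq_card hli]
  simp [Fintype.card_coe]

lemma jantzen_aux_dvd_repr {ι : Type*} [Fintype ι] [DecidableEq ι]
    (b : Basis ι ℤ (ι → ℤ)) (d : ℤ) (x : ι → ℤ) :
    (∃ y, x = d • y) ↔ ∀ i, d ∣ b.repr x i := by
  classical
  constructor
  · rintro ⟨y, rfl⟩ i
    rw [map_smul]
    exact ⟨b.repr y i, rfl⟩
  · intro h
    choose c hc using h
    refine ⟨∑ i, c i • b i, ?_⟩
    apply b.repr.injective
    ext i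
    rw [map_smul, Finsupp.smul_apply, map_sum]
    simp only [map_smul, Basis.repr_self, Finsupp.smul_single, smul_eq_mul, mul_one,
      Finset.sum_apply', Finsupp.single_apply]
    rw [Finset.sum_ite_eq' Finset.univ i c]
    simp [hc i]

lemma jantzen_aux_dvd_iff {ι : Type*} [Fintype ι] [DecidableEq ι]
    (b : Basis ι ℤ (ι → ℤ)) (d : ℤ) (x : ι → ℤ) :
    (∀ j, d ∣ x j) ↔ ∀ i, d ∣ b.repr x i := by
  rw [← jantzen_aux_dvd_repr b d x]
  rw [jantzen_aux_dvd_repr (Pi.basisFun ℤ ι) d x]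
  simp [Pi.basisFun_repr]

lemma jantzen_aux_val_prod (p : ℕ) [Fact p.Prime] {ι : Type*} (s : Finset ι) (a : ι → ℤ)
    (ha : ∀ i ∈ s, a i ≠ 0) :
    padicValInt p (∏ i ∈ s, a i) = ∑ i ∈ s, padicValInt p (a i) := by
  classical
  induction s using Finset.induction_on with
  | empty => simp [padicValInt]
  | insert _ _ hnotmem ih =>
    rename_i i s'
    rw [Finset.prod_insert hnotmem, Finset.sum_insert hnotmem,
      padicValInt.mul (ha i (Finset.mem_insert_self i s'))
        (Finset.prod_ne_zero_iff.mpr fun j hj => ha j (Finset.mem_insert_of_mem hj)),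
      ih (fun j hj => ha j (Finset.mem_insert_of_mem hj))]

/-- Jantzen's lemma over ℤ: let M = ℤ^ι carry a non-degenerate symmetric bilinear form B with
Gram matrix G, let J_k(M) = {m : ⟨m,u⟩ ∈ p^kℤ ∀ u} and let J_k(M_{𝔽_p}) be the image of
J_k(M) in M ⊗ 𝔽_p.  Then Σ_{k>0} dim J_k(M_{𝔽_p}) = ν_p(det G). -/
theorem jantzen_sum_dim_eq_padic_val (p : ℕ) (hp : p.Prime) {ι : Type*} [Fintype ι]
    [DecidableEq ι]
    (B : (ι → ℤ) →ₗ[ℤ] (ι → ℤ) →ₗ[ℤ] ℤ)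
    (hsymm : ∀ m u, B m u = B u m)
    (G : Matrix ι ι ℤ) (hG : ∀ i j, G i j = B (Pi.single i 1) (Pi.single j 1))
    (hdet : G.det ≠ 0) :
    ∑' k : ℕ, Module.finrank (ZMod p)
        (Submodule.span (ZMod p)
          ((fun m : ι → ℤ => fun i => ((m i : ℤ) : ZMod p)) ''
            {m : ι → ℤ | ∀ v : ι → ℤ, (p : ℤ) ^ (k + 1) ∣ B m v})) =
      padicValInt p G.det := by
  classical
  haveI : Fact p.Prime := ⟨hp⟩
  set g : (ι → ℤ) →ₗ[ℤ] (ι → ℤ) := Matrix.toLin' (Matrix.transpose G) with hgdef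
  have hgm : ∀ (m : ι → ℤ) j, g m j = ∑ i, G i j * m i := by
    intro m j
    simp [hgdef, Matrix.toLin'_apply, Matrix.mulVec, dotProduct, Matrix.transpose_apply]
  have hginj : Function.Injective g := by
    have h0 : ∀ m, g m = 0 → m = 0 := by
      intro m h
      refine Matrix.eq_zero_of_mulVec_eq_zero (by rwa [Matrix.det_transpose]) ?_
      rwa [hgdef, Matrix.toLin'_apply] at h
    intro a b hab
    have := h0 (a - b) (by rw [map_sub, hab, sub_self])
    exact sub_eq_zero.mp this
  -- expansion of B in terms of g
  have hsingle : ∀ x : ι → ℤ, x = ∑ i, x i • Pi.single i (1 : ℤ) := by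
    intro x
    conv_lhs => rw [← Finset.univ_sum_single x]
    refine Finset.sum_congr rfl fun i _ => ?_
    rw [← Pi.single_smul, smul_eq_mul, mul_one]
  have hBs : ∀ (m : ι → ℤ) j, B m (Pi.single j 1) = g m j := by
    intro m j
    conv_lhs => rw [hsingle m]
    rw [map_sum, LinearMap.sum_apply, hgm]
    refine Finset.sum_congr rfl fun i _ => ?_
    rw [map_smul, LinearMap.smul_apply, ← hG, smul_eq_mul]
    ring
  have hBv : ∀ m v, B m v = ∑ j, (g m j) * v j := by
    intro m v
    conv_lhs => rw [hsingle v]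
    rw [map_sum]
    refine Finset.sum_congr rfl fun j _ => ?_
    rw [map_smul, smul_eq_mul, hBs, mul_comm]
  -- Smith normal form
  obtain ⟨n, snf⟩ := Submodule.smithNormalForm (Pi.basisFun ℤ ι) (LinearMap.range g)
  obtain ⟨bM, bN, f, a, hsnf⟩ := snf
  -- n = card ι
  have hcard : Fintype.card (Fin n) = Fintype.card ι := by
    have h1 : Module.finrank ℤ (LinearMap.range g) = n := by
      rw [Module.finrank_eq_card_basis bN, Fintype.card_fin]
    have h2 : Module.finrank ℤ (LinearMap.range g) = Fintype.card ι := by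
      rw [← (LinearEquiv.ofInjective g hginj).finrank_eq, Module.finrank_pi]
    rw [Fintype.card_fin]
    rw [h1] at h2
    exact h2
  have hfbij : Function.Bijective f :=
    (Fintype.bijective_iff_injective_and_card f).mpr ⟨f.injective, hcard⟩
  set eι : Fin n ≃ ι := Equiv.ofBijective f hfbij with heι
  set bN' : Basis ι ℤ (LinearMap.range g) := bN.reindex eι with hbN'
  set a' : ι → ℤ := fun i => a (eι.symm i) with ha'
  have hsnf' : ∀ i, ((bN' i : ι → ℤ)) = a' i • bM i := by
    intro i
    rw [hbN', Basis.reindex_apply, hsnf]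
    have hfi : f (eι.symm i) = i := by
      rw [show f (eι.symm i) = eι (eι.symm i) from rfl, Equiv.apply_symm_apply]
    rw [hfi]
  -- the adapted basis e of ℤ^ι
  set eqv : (ι → ℤ) ≃ₗ[ℤ] LinearMap.range g := LinearEquiv.ofInjective g hginj with heqv
  set e : Basis ι ℤ (ι → ℤ) := bN'.map eqv.symm with he
  have hge : ∀ i, g (e i) = (bN' i : ι → ℤ) := by
    intro i
    have : eqv (e i) = bN' i := by
      rw [he, Basis.map_apply, LinearEquiv.apply_symm_apply]
    calc g (e i) = ((eqv (e i) : LinearMap.range g) : ι → ℤ) := rfl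
      _ = (bN' i : ι → ℤ) := by rw [this]
  -- coordinates of g m
  have hrep : ∀ (m : ι → ℤ) i, bM.repr (g m) i = a' i * e.repr m i := by
    intro m i
    conv_lhs => rw [← e.sum_repr m]
    rw [map_sum, map_sum]
    simp only [map_smul, Finsupp.smul_apply]
    have : ∀ j, bM.repr (g (e j)) i = if j = i then a' j else 0 := by
      intro j
      rw [hge, hsnf' j, map_smul, Basis.repr_self, Finsupp.smul_apply, Finsupp.single_apply]
      split_ifs with h <;> simp [h]
    rw [Finset.sum_apply']
    simp only [Finsupp.smul_apply, this, smul_ite, smul_zero, smul_eq_mul]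
    simp only [mul_ite, mul_zero]
    rw [Finset.sum_ite_eq' Finset.univ i]
    simp [mul_comm]
  -- membership characterization
  have hmem : ∀ (k : ℕ) (m : ι → ℤ),
      (∀ v, (p : ℤ) ^ (k + 1) ∣ B m v) ↔ ∀ i, (p : ℤ) ^ (k + 1) ∣ a' i * e.repr m i := by
    intro k m
    constructor
    · intro h i
      have h1 : ∀ j, (p : ℤ) ^ (k + 1) ∣ g m j := by
        intro j
        have := h (Pi.single j 1)
        rwa [hBs] at this
      have h2 := (jantzen_aux_dvd_iff bM ((p : ℤ) ^ (k + 1)) (g m)).mp h1 i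
      rwa [hrep] at h2
    · intro h v
      rw [hBv]
      refine Finset.dvd_sum fun j _ => ?_
      refine Dvd.dvd.mul_right ?_ _
      have := (jantzen_aux_dvd_iff bM ((p : ℤ) ^ (k + 1)) (g m)).mpr ?_ j
      · exact this
      · intro i
        rw [hrep]
        exact h i
  -- determinant computation
  have hdiag : LinearMap.toMatrix e bM g = Matrix.diagonal a' := by
    ext i j
    rw [LinearMap.toMatrix_apply, hge, hsnf' j, map_smul, Basis.repr_self, Finsupp.smul_apply,
      Finsupp.single_apply, Matrix.diagonal_apply]
    by_cases hij : i = j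
    · subst hij; simp
    · simp [hij, Ne.symm hij]
  have hcompm : LinearMap.toMatrix bM bM g =
      LinearMap.toMatrix e bM g * LinearMap.toMatrix bM e LinearMap.id := by
    rw [← LinearMap.toMatrix_comp bM e bM g LinearMap.id, LinearMap.comp_id]
  have hdetu : G.det = (∏ i, a' i) * (LinearMap.toMatrix bM e LinearMap.id).det := by
    have h1 : LinearMap.det g = G.det := by rw [hgdef, LinearMap.det_toLin', Matrix.det_transpose]
    rw [← h1, ← LinearMap.det_toMatrix bM g, hcompm, Matrix.det_mul, hdiag, Matrix.det_diagonal]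
  have hu : IsUnit (LinearMap.toMatrix bM e LinearMap.id).det := by
    rw [LinearMap.toMatrix_id_eq_basis_toMatrix]
    haveI := e.invertibleToMatrix bM
    exact Matrix.isUnit_det_of_invertible _
  have hprodne : (∏ i, a' i) ≠ 0 := by
    intro h0
    rw [h0, zero_mul] at hdetu
    exact hdet hdetu
  have ha'ne : ∀ i, a' i ≠ 0 := fun i =>
    Finset.prod_ne_zero_iff.mp hprodne i (Finset.mem_univ i)
  set ν : ι → ℕ := fun i => padicValInt p (a' i) with hν
  have hdvdν : ∀ (k : ℕ) i, (p : ℤ) ^ (k + 1) ∣ a' i ↔ k < ν i := by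
    intro k i
    rw [padicValInt_dvd_iff (k + 1) (a' i)]
    simp [ha'ne i, Nat.succ_le_iff, hν]
  -- per-k dimension
  have hterm : ∀ k : ℕ, Module.finrank (ZMod p)
      (Submodule.span (ZMod p)
        ((fun m : ι → ℤ => fun i => ((m i : ℤ) : ZMod p)) ''
          {m : ι → ℤ | ∀ v : ι → ℤ, (p : ℤ) ^ (k + 1) ∣ B m v})) =
      (Finset.univ.filter fun i => k < ν i).card := by
    intro k
    refine jantzen_aux_dim p hp e _ (Finset.univ.filter fun i => k < ν i) ?_ ?_
    · intro m hm i hi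
      rw [Finset.mem_filter, not_and] at hi
      have hnd : ¬ (p : ℤ) ^ (k + 1) ∣ a' i := by
        rw [hdvdν]
        exact fun h => hi (Finset.mem_univ i) h
      have hd : (p : ℤ) ^ (k + 1) ∣ a' i * e.repr m i := (hmem k m).mp hm i
      by_contra hpc
      have hpint : Prime (p : ℤ) := Nat.prime_iff_prime_int.mp hp
      have hcop : IsCoprime ((p : ℤ) ^ (k + 1)) (e.repr m i) :=
        ((hpint.coprime_iff_not_dvd).mpr hpc).pow_left
      exact hnd (hcop.dvd_of_dvd_mul_right hd)
    · intro i hi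
      rw [Finset.mem_filter] at hi
      show ∀ v : ι → ℤ, (p : ℤ) ^ (k + 1) ∣ B (e i) v
      rw [hmem k (e i)]
      intro j
      rw [Basis.repr_self, Finsupp.single_apply]
      by_cases hij : i = j
      · subst hij
        simpa using (hdvdν k i).mpr hi.2
      · simp [hij]
  rw [tsum_congr hterm, jantzen_aux_tsum]
  -- valuation computation
  have hval : padicValInt p G.det = padicValInt p (∏ i, a' i) := by
    rcases Int.isUnit_iff.mp hu with hu1 | hu1
    · rw [hdetu, hu1, mul_one]
    · rw [hdetu, hu1]
      show padicValNat p (((∏ i, a' i) * (-1)).natAbs) = padicValInt p (∏ i, a' i)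
      rw [Int.natAbs_mul]
      simp [padicValInt]
  rw [hval, jantzen_aux_val_prod p Finset.univ a' (fun i _ => ha'ne i)]
end

section
/- Let λ be a partition, n ≥ L(λ), and suppose μ is obtained from λ by removing a rim hook R of length h whose topmost cell lies in row a and whose leg length is l (the number of rows of R minus one). Then with beta numbers β_r^λ = λ_r + n − r and β_r^μ = μ_r + n − r, we have β_r^μ = β_{r+1}^λ for a ≤ r < a + l, β_{a+l}^μ = β_a^λ − h, and β_r^μ = β_r^λ for all other r. -/
/-- The set of cells (0-indexed) of the Young diagram of a partition `l : ℕ → ℕ`. -/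
def cellsOf (l : ℕ → ℕ) : Set (ℕ × ℕ) := {p | p.2 < l p.1}

/-- `l` is (the part function of) a partition of length at most `n`. -/
def IsPartitionUpTo (l : ℕ → ℕ) (n : ℕ) : Prop :=
  (∀ i, l (i + 1) ≤ l i) ∧ ∀ i, n ≤ i → l i = 0

/-- The beta numbers of `l` (0-indexed): β_r = l r + (n − 1 − r) for r = 0, …, n−1. -/
def betaN (l : ℕ → ℕ) (n r : ℕ) : ℕ := l r + (n - 1 - r)

/-- The rim hook of `l` at the cell α = (a, b) ∈ l (0-indexed):
R_α = {(c,d) ∈ l : a ≤ c ≤ λ'_b − 1, b ≤ d ≤ λ_a − 1, (c+1, d+1) ∉ l}, where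
`conj` = λ'_b is the length of column b. -/
def rimHookAt (l : ℕ → ℕ) (n a b : ℕ) : Set (ℕ × ℕ) :=
  {p | a ≤ p.1 ∧ p.1 < ((Finset.range n).filter fun r => b < l r).card ∧
       b ≤ p.2 ∧ p.2 < l a ∧ p.2 < l p.1 ∧ ¬ (p.2 + 1 < l (p.1 + 1))}

lemma telescope_sub (f : ℕ → ℕ) (hf : ∀ i, f (i + 1) ≤ f i) (a : ℕ) :
    ∀ c, a ≤ c → ∑ r ∈ Finset.Ico a c, (f r - f (r + 1)) = f a - f c := by
  intro c
  induction c with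
  | zero => intro hac; interval_cases a; simp
  | succ c ih =>
    intro hac
    rcases Nat.lt_or_ge a (c + 1) with hlt | hge
    · have hac' : a ≤ c := by omega
      rw [Finset.sum_Ico_succ_top hac', ih hac']
      have hfa : f c ≤ f a := antitone_nat_of_succ_le hf hac'
      have := hf c
      omega
    · have : a = c + 1 := by omega
      subst this
      simp

/-- Removing the rim hook R_α at α = (a, b) (with hook length h = |R_α| and leg length
leg = λ'_b − 1 − a) from λ replaces the beta numbers as follows: β^μ_r = β^λ_{r+1} for
a ≤ r < a + leg, β^μ_{a+leg} = β^λ_a − h, and β^μ_r = β^λ_r for all other r. -/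
theorem rim_hook_removal_beta_numbers (n : ℕ) (hn : 1 ≤ n) (l m : ℕ → ℕ)
    (hl : IsPartitionUpTo l n) (hm : IsPartitionUpTo m n)
    (a b : ℕ) (hab : b < l a)
    (conj leg h : ℕ)
    (hconj : conj = ((Finset.range n).filter fun r => b < l r).card)
    (hleg : leg = conj - 1 - a)
    (hh : h = (rimHookAt l n a b).ncard)
    (hμ : cellsOf m = cellsOf l \ rimHookAt l n a b) :
    (∀ r, a ≤ r → r < a + leg → betaN m n r = betaN l n (r + 1)) ∧
    betaN m n (a + leg) = betaN l n a - h ∧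
    (∀ r, r < a ∨ a + leg < r → betaN m n r = betaN l n r) := by
  obtain ⟨hl1, hl2⟩ := hl
  have lant : Antitone l := antitone_nat_of_succ_le hl1
  have han : a < n := by
    by_contra h'
    push_neg at h'
    have := hl2 a h'
    omega
  -- the column length c
  have hex : ∃ r, l r ≤ b := ⟨n, by rw [hl2 n le_rfl]; omega⟩
  set c := Nat.find hex with hc
  have hcb : l c ≤ b := Nat.find_spec hex
  have hlt : ∀ r, r < c → b < l r := by
    intro r hr
    have := Nat.find_min hex hr
    omega
  have hge : ∀ r, c ≤ r → l r ≤ b := fun r hr => le_trans (lant hr) hcb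
  have hcn : c ≤ n := Nat.find_le (by rw [hl2 n le_rfl]; omega)
  have hac : a < c := by
    by_contra h'
    push_neg at h'
    have := hge a h'
    omega
  -- conj = c
  have hfc : ((Finset.range n).filter fun r => b < l r).card = c := by
    have : ((Finset.range n).filter fun r => b < l r) = Finset.range c := by
      ext r
      simp only [Finset.mem_filter, Finset.mem_range]
      constructor
      · rintro ⟨_, h2⟩
        by_contra h3
        push_neg at h3
        have := hge r h3
        omega
      · intro hr
        exact ⟨by omega, hlt r hr⟩
    rw [this, Finset.card_range]
  have hconjc : conj = c := by rw [hconj, hfc]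
  subst hconjc
  -- membership in the rim hook
  have hmem : ∀ r d : ℕ, (r, d) ∈ rimHookAt l n a b ↔
      (a ≤ r ∧ r < c ∧ b ≤ d ∧ d < l a ∧ d < l r ∧ ¬ (d + 1 < l (r + 1))) := by
    intro r d
    simp only [rimHookAt, Set.mem_setOf_eq, hfc]
  have hiff : ∀ r d : ℕ, d < m r ↔ d < l r ∧ (r, d) ∉ rimHookAt l n a b := by
    intro r d
    have := Set.ext_iff.mp hμ (r, d)
    simpa [cellsOf, Set.mem_diff] using this
  have hrow : ∀ r d : ℕ, (r, d) ∈ rimHookAt l n a b ↔ (r < c ∧ m r ≤ d ∧ d < l r) := by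
    intro r d
    constructor
    · intro hp
      have h1 := (hmem r d).mp hp
      refine ⟨h1.2.1, ?_, h1.2.2.2.2.1⟩
      by_contra h'
      push_neg at h'
      exact ((hiff r d).mp h').2 hp
    · rintro ⟨_, h1, h2⟩
      by_contra hp
      have := (hiff r d).mpr ⟨h2, hp⟩
      omega
  have eqOf : ∀ x y : ℕ, (∀ d, d < x ↔ d < y) → x = y := by
    intro x y hxy
    have h1 := hxy x
    have h2 := hxy y
    omega
  -- values of m
  have hm_out : ∀ r, r < a ∨ c ≤ r → m r = l r := by
    intro r hr
    apply eqOf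
    intro d
    rw [hiff r d]
    constructor
    · exact fun h' => h'.1
    · intro h'
      refine ⟨h', fun hp => ?_⟩
      rw [hmem] at hp
      omega
  have hm_mid : ∀ r, a ≤ r → r + 1 < c → m r = l (r + 1) - 1 := by
    intro r hra hrc
    have f1 : b < l (r + 1) := hlt _ hrc
    have f2 : l (r + 1) ≤ l r := hl1 r
    have f3 : l r ≤ l a := lant hra
    apply eqOf
    intro d
    rw [hiff r d]
    constructor
    · rintro ⟨h1, h2⟩
      by_contra h3
      push_neg at h3
      exact h2 ((hmem r d).mpr ⟨hra, by omega, by omega, by omega, h1, by omega⟩)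
    · intro h'
      refine ⟨by omega, fun hp => ?_⟩
      rw [hmem] at hp
      omega
  have hm_last : m (c - 1) = b := by
    have f1 : b < l (c - 1) := hlt _ (by omega)
    have f2 : l (c - 1) ≤ l a := lant (by omega)
    have f3 : l (c - 1 + 1) ≤ b := by
      rw [show c - 1 + 1 = c from by omega]
      exact hcb
    apply eqOf
    intro d
    rw [hiff]
    constructor
    · rintro ⟨h1, h2⟩
      by_contra h3
      push_neg at h3
      exact h2 ((hmem _ d).mpr ⟨by omega, by omega, h3, by omega, h1, by omega⟩)
    · intro h'
      refine ⟨by omega, fun hp => ?_⟩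
      rw [hmem] at hp
      omega
  have hml : ∀ r, m r ≤ l r := by
    intro r
    by_contra h'
    push_neg at h'
    have := (hiff r (l r)).mp h'
    omega
  -- compute h
  have hF : rimHookAt l n a b =
      ↑((Finset.range c).biUnion fun r =>
        (Finset.Ico (m r) (l r)).map ⟨fun d => (r, d), fun x y hxy => by simpa using hxy⟩) := by
    ext ⟨r, d⟩
    rw [hrow]
    simp only [Finset.coe_biUnion, Finset.coe_map, Finset.mem_range, Set.mem_iUnion,
      Set.mem_image, Finset.mem_coe, Finset.mem_Ico, Function.Embedding.coeFn_mk,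
      Prod.mk.injEq]
    constructor
    · rintro ⟨h1, h2, h3⟩
      exact ⟨r, h1, d, ⟨h2, h3⟩, rfl⟩
    · rintro ⟨r', h1, d', ⟨h2, h3⟩, hpq⟩
      obtain ⟨rfl, rfl⟩ := Prod.mk.inj hpq
      exact ⟨h1, h2, h3⟩
  have hhval : h = l a - b + (c - 1 - a) := by
    rw [hh, hF, Set.ncard_coe_finset]
    rw [Finset.card_biUnion]
    · have hterm : ∀ r ∈ Finset.range c, ((Finset.Ico (m r) (l r)).map
          ⟨fun d => (r, d), fun x y hxy => by simpa using hxy⟩).card = l r - m r := by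
        intro r _
        rw [Finset.card_map, Nat.card_Ico]
      rw [Finset.sum_congr rfl hterm]
      rw [Finset.range_eq_Ico, ← Finset.sum_Ico_consecutive _ (Nat.zero_le a) (le_of_lt hac)]
      have hz : ∑ r ∈ Finset.Ico 0 a, (l r - m r) = 0 := by
        apply Finset.sum_eq_zero
        intro r hr
        rw [Finset.mem_Ico] at hr
        rw [hm_out r (Or.inl hr.2)]
        omega
      rw [hz, zero_add]
      rw [show c = (c - 1) + 1 from by omega, Finset.sum_Ico_succ_top (by omega : a ≤ c - 1)]
      have hmid : ∑ r ∈ Finset.Ico a (c - 1), (l r - m r) =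
          ∑ r ∈ Finset.Ico a (c - 1), ((l r - l (r + 1)) + 1) := by
        apply Finset.sum_congr rfl
        intro r hr
        rw [Finset.mem_Ico] at hr
        rw [hm_mid r hr.1 (by omega)]
        have f1 : b < l (r + 1) := hlt _ (by omega)
        have f2 : l (r + 1) ≤ l r := hl1 r
        omega
      rw [hmid, Finset.sum_add_distrib, Finset.sum_const, Nat.card_Ico,
        telescope_sub l hl1 a (c - 1) (by omega), hm_last]
      have f1 : b < l (c - 1) := hlt _ (by omega)
      have f2 : l (c - 1) ≤ l a := lant (by omega)
      simp only [smul_eq_mul, mul_one]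
      omega
    · intro x _ y _ hxy
      simp only [Finset.disjoint_left, Finset.mem_map, Function.Embedding.coeFn_mk]
      rintro p ⟨d, _, rfl⟩ ⟨d', _, hne⟩
      rw [Prod.mk.injEq] at hne
      exact hxy hne.1.symm
  -- conclusion
  have hleg' : a + leg = c - 1 := by omega
  refine ⟨?_, ?_, ?_⟩
  · intro r hra hrc
    rw [hleg'] at hrc
    have hrm : m r = l (r + 1) - 1 := hm_mid r hra (by omega)
    have f1 : b < l (r + 1) := hlt _ (by omega)
    simp only [betaN, hrm]
    omega
  · rw [hleg']
    simp only [betaN, hm_last, hhval]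
    omega
  · intro r hr
    rw [hleg'] at hr
    have : m r = l r := hm_out r (by omega)
    simp only [betaN, this]
end

section
/- Let A be a cellular algebra over a field F with cell datum (𝒫, T, C), and for λ ∈ 𝒫 let D^λ = C^λ / rad C^λ. If μ ∈ 𝒫 satisfies D^μ ≠ 0, then the composition multiplicity [C^μ : D^μ] = 1, and for any λ ∈ 𝒫, [C^λ : D^μ] ≠ 0 implies λ ≥ μ in the poset order. -/
set_option linter.unusedSectionVars false

section Aux

variable {F A P : Type*} [Field F] [Ring A] [Algebra F A] [PartialOrder P]
    {T : P → Type*} [∀ p, Fintype (T p)]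
    {c : ∀ p, T p → T p → A}
    {b : Module.Basis ((p : P) × (T p × T p)) F A}

lemma cell_repr_zero (hb : ∀ (p : P) (s t : T p), b ⟨p, (s, t)⟩ = c p s t)
    (S : Set P) {y : A}
    (hy : y ∈ Submodule.span F {x : A | ∃ q, q ∈ S ∧ ∃ u v : T q, x = c q u v})
    {p : P} (hp : p ∉ S) (s t : T p) : b.repr y ⟨p, (s, t)⟩ = 0 := by
  have hsub : {x : A | ∃ q, q ∈ S ∧ ∃ u v : T q, x = c q u v} ⊆ b '' {i | i.1 ∈ S} := by
    rintro x ⟨q, hq, u, v, rfl⟩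
    exact ⟨⟨q, (u, v)⟩, hq, hb q u v⟩
  have h2 : y ∈ Submodule.span F (b '' {i | i.1 ∈ S}) := Submodule.span_mono hsub hy
  by_contra h
  exact hp (b.mem_span_image.1 h2 (Finsupp.mem_support_iff.2 h))

lemma cell_repr_sum (hb : ∀ (p : P) (s t : T p), b ⟨p, (s, t)⟩ = c p s t)
    (p : P) (u : T p) (f : T p → F) (w₀ : T p) :
    b.repr (∑ w, f w • c p u w) ⟨p, (u, w₀)⟩ = f w₀ := by
  classical
  have key : ∀ w : T p, b.repr (f w • c p u w) ⟨p, (u, w₀)⟩ = if w = w₀ then f w else 0 := by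
    intro w
    rw [← hb, map_smul, Finsupp.smul_apply, b.repr_self, Finsupp.single_apply]
    by_cases h : w = w₀
    · subst h; simp
    · rw [if_neg, if_neg h, smul_zero]
      intro hc
      apply h
      simpa using hc
  rw [map_sum, Finsupp.finset_sum_apply]
  simp_rw [key]
  simp


variable {τ : A →ₗ[F] A} {r : ∀ p : P, A → T p → T p → F}
    {M : P → Type*} [∀ p, AddCommGroup (M p)] [∀ p, Module A (M p)]
    [∀ p, Module F (M p)] [∀ p, IsScalarTower F A (M p)]
    {bas : ∀ p, Module.Basis (T p) F (M p)}
    {form : ∀ p, M p →ₗ[F] M p →ₗ[F] F}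
    {rad : ∀ p, Submodule A (M p)}

/-- coefficient formula -/
lemma cell_r_repr (hb : ∀ (p : P) (s t : T p), b ⟨p, (s, t)⟩ = c p s t)
    (hmul : ∀ (p : P) (s t : T p) (a : A),
      c p s t * a - ∑ v, r p a t v • c p s v ∈
        Submodule.span F {x : A | ∃ q, p < q ∧ ∃ u v : T q, x = c q u v})
    (hform : ∀ (p : P) (u s t v : T p),
      c p u s * c p t v - (form p (bas p s) (bas p t)) • c p u v ∈
        Submodule.span F {x : A | ∃ q, p < q ∧ ∃ u' v' : T q, x = c q u' v'})
    (p : P) (s t v w : T p) :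
    r p (c p t s) v w
      = b.repr (form p (bas p v) (bas p t) • c p v s) ⟨p, (v, w)⟩ := by
  have h1 := hmul p v v (c p t s)
  have h2 := hform p v v t s
  have h4 : (∑ w', r p (c p t s) v w' • c p v w')
      - form p (bas p v) (bas p t) • c p v s ∈
      Submodule.span F {x : A | ∃ q, q ∈ {q | p < q} ∧ ∃ u v : T q, x = c q u v} := by
    have := Submodule.sub_mem _ h2 h1
    rw [sub_sub_sub_cancel_left] at this
    exact this
  have e1 := cell_repr_zero hb {q | p < q} h4 (lt_irrefl p) v w
  rwa [map_sub, Finsupp.sub_apply, cell_repr_sum hb, sub_eq_zero] at e1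

lemma cell_r_diag (hb : ∀ (p : P) (s t : T p), b ⟨p, (s, t)⟩ = c p s t)
    (hmul : ∀ (p : P) (s t : T p) (a : A),
      c p s t * a - ∑ v, r p a t v • c p s v ∈
        Submodule.span F {x : A | ∃ q, p < q ∧ ∃ u v : T q, x = c q u v})
    (hform : ∀ (p : P) (u s t v : T p),
      c p u s * c p t v - (form p (bas p s) (bas p t)) • c p u v ∈
        Submodule.span F {x : A | ∃ q, p < q ∧ ∃ u' v' : T q, x = c q u' v'})
    (p : P) (s t v : T p) :
    r p (c p t s) v s = form p (bas p v) (bas p t) := by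
  rw [cell_r_repr hb hmul hform p s t v s, map_smul, Finsupp.smul_apply, ← hb,
    b.repr_self]
  simp

lemma cell_r_off (hb : ∀ (p : P) (s t : T p), b ⟨p, (s, t)⟩ = c p s t)
    (hmul : ∀ (p : P) (s t : T p) (a : A),
      c p s t * a - ∑ v, r p a t v • c p s v ∈
        Submodule.span F {x : A | ∃ q, p < q ∧ ∃ u v : T q, x = c q u v})
    (hform : ∀ (p : P) (u s t v : T p),
      c p u s * c p t v - (form p (bas p s) (bas p t)) • c p u v ∈
        Submodule.span F {x : A | ∃ q, p < q ∧ ∃ u' v' : T q, x = c q u' v'})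
    (p : P) (s t v w : T p) (hw : w ≠ s) :
    r p (c p t s) v w = 0 := by
  classical
  rw [cell_r_repr hb hmul hform p s t v w, map_smul, Finsupp.smul_apply, ← hb,
    b.repr_self, Finsupp.single_apply, if_neg, smul_zero]
  intro hc
  obtain ⟨-, h2⟩ := Sigma.mk.inj_iff.1 hc
  exact hw (Prod.ext_iff.1 (eq_of_heq h2)).2.symm

lemma cell_smul_bas (hb : ∀ (p : P) (s t : T p), b ⟨p, (s, t)⟩ = c p s t)
    (hτc : ∀ (p : P) (s t : T p), τ (c p s t) = c p t s)
    (hmul : ∀ (p : P) (s t : T p) (a : A),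
      c p s t * a - ∑ v, r p a t v • c p s v ∈
        Submodule.span F {x : A | ∃ q, p < q ∧ ∃ u v : T q, x = c q u v})
    (haction : ∀ (p : P) (a : A) (t : T p),
      a • bas p t = ∑ v, r p (τ a) t v • bas p v)
    (hform : ∀ (p : P) (u s t v : T p),
      c p u s * c p t v - (form p (bas p s) (bas p t)) • c p u v ∈
        Submodule.span F {x : A | ∃ q, p < q ∧ ∃ u' v' : T q, x = c q u' v'})
    (p : P) (s t v : T p) :
    c p s t • bas p v = form p (bas p v) (bas p t) • bas p s := by
  classical
  rw [haction p _ v, hτc]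
  rw [Finset.sum_eq_single s]
  · rw [cell_r_diag hb hmul hform]
  · intro w _ hw
    rw [cell_r_off hb hmul hform p s t v w hw, zero_smul]
  · intro h
    exact absurd (Finset.mem_univ s) h

/-- the action of `a` as an `F`-linear map -/
def actL (a : A) (p : P) : M p →ₗ[F] M p where
  toFun x := a • x
  map_add' x y := smul_add a x y
  map_smul' f x := by simpa using smul_comm a f x

lemma cell_smul (hb : ∀ (p : P) (s t : T p), b ⟨p, (s, t)⟩ = c p s t)
    (hτc : ∀ (p : P) (s t : T p), τ (c p s t) = c p t s)
    (hmul : ∀ (p : P) (s t : T p) (a : A),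
      c p s t * a - ∑ v, r p a t v • c p s v ∈
        Submodule.span F {x : A | ∃ q, p < q ∧ ∃ u v : T q, x = c q u v})
    (haction : ∀ (p : P) (a : A) (t : T p),
      a • bas p t = ∑ v, r p (τ a) t v • bas p v)
    (hform : ∀ (p : P) (u s t v : T p),
      c p u s * c p t v - (form p (bas p s) (bas p t)) • c p u v ∈
        Submodule.span F {x : A | ∃ q, p < q ∧ ∃ u' v' : T q, x = c q u' v'})
    (p : P) (s t : T p) (x : M p) :
    c p s t • x = form p x (bas p t) • bas p s := by
  have : actL (c p s t) p = ((form p).flip (bas p t)).smulRight (bas p s) := by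
    apply (bas p).ext
    intro v
    simpa [actL] using cell_smul_bas hb hτc hmul haction hform p s t v
  simpa [actL] using LinearMap.congr_fun this x


lemma smulF_mem {p : P} (N : Submodule A (M p)) (f : F) {x : M p} (hx : x ∈ N) :
    f • x ∈ N := by
  rw [← algebraMap_smul A f x]
  exact N.smul_mem _ hx

lemma mem_rad_iff (hrad : ∀ (p : P) (x : M p), x ∈ rad p ↔ ∀ y, form p x y = 0)
    (p : P) (x : M p) : x ∈ rad p ↔ ∀ t, form p x (bas p t) = 0 := by
  rw [hrad]
  constructor
  · intro h t; exact h _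
  · intro h y
    have h0 : form p x = 0 := (bas p).ext fun t => by simpa using h t
    rw [h0]
    rfl

lemma tau_tau (hb : ∀ (p : P) (s t : T p), b ⟨p, (s, t)⟩ = c p s t)
    (hτc : ∀ (p : P) (s t : T p), τ (c p s t) = c p t s) (y : A) : τ (τ y) = y := by
  have : τ ∘ₗ τ = LinearMap.id := by
    apply b.ext
    rintro ⟨p, s, t⟩
    simp [hb, hτc]
  simpa using LinearMap.congr_fun this y

lemma ann_subquotient {R Mod : Type*} [Ring R] [AddCommGroup Mod] [Module R Mod]
    (W V : Submodule R Mod) (a : R) (hW : ∀ x ∈ W, a • x = 0)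
    (z : ↥W ⧸ Submodule.comap W.subtype V) : a • z = 0 := by
  obtain ⟨n, rfl⟩ := Submodule.Quotient.mk_surjective _ z
  rw [← Submodule.Quotient.mk_smul]
  have h0 : a • n = (0 : W) := Subtype.ext (by simpa using hW _ n.2)
  rw [h0, Submodule.Quotient.mk_zero]

lemma no_iso {R X Y : Type*} [Ring R] [AddCommGroup X] [Module R X]
    [AddCommGroup Y] [Module R Y] (a : R) (hX : ∀ x : X, a • x = 0)
    {y : Y} (hy : a • y ≠ 0) : ¬ Nonempty (X ≃ₗ[R] Y) := by
  rintro ⟨e⟩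
  apply hy
  rw [← e.apply_symm_apply y, ← map_smul, hX, map_zero]


lemma rad_ann (hb : ∀ (p : P) (s t : T p), b ⟨p, (s, t)⟩ = c p s t)
    (hτc : ∀ (p : P) (s t : T p), τ (c p s t) = c p t s)
    (hmul : ∀ (p : P) (s t : T p) (a : A),
      c p s t * a - ∑ v, r p a t v • c p s v ∈
        Submodule.span F {x : A | ∃ q, p < q ∧ ∃ u v : T q, x = c q u v})
    (haction : ∀ (p : P) (a : A) (t : T p),
      a • bas p t = ∑ v, r p (τ a) t v • bas p v)
    (hform : ∀ (p : P) (u s t v : T p),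
      c p u s * c p t v - (form p (bas p s) (bas p t)) • c p u v ∈
        Submodule.span F {x : A | ∃ q, p < q ∧ ∃ u' v' : T q, x = c q u' v'})
    (hrad : ∀ (p : P) (x : M p), x ∈ rad p ↔ ∀ y, form p x y = 0)
    (p : P) (s t : T p) {x : M p} (hx : x ∈ rad p) : c p s t • x = 0 := by
  rw [cell_smul hb hτc hmul haction hform p s t x, (hrad p x).1 hx, zero_smul]

lemma sub_le_rad_or_top (hb : ∀ (p : P) (s t : T p), b ⟨p, (s, t)⟩ = c p s t)
    (hτc : ∀ (p : P) (s t : T p), τ (c p s t) = c p t s)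
    (hmul : ∀ (p : P) (s t : T p) (a : A),
      c p s t * a - ∑ v, r p a t v • c p s v ∈
        Submodule.span F {x : A | ∃ q, p < q ∧ ∃ u v : T q, x = c q u v})
    (haction : ∀ (p : P) (a : A) (t : T p),
      a • bas p t = ∑ v, r p (τ a) t v • bas p v)
    (hform : ∀ (p : P) (u s t v : T p),
      c p u s * c p t v - (form p (bas p s) (bas p t)) • c p u v ∈
        Submodule.span F {x : A | ∃ q, p < q ∧ ∃ u' v' : T q, x = c q u' v'})
    (hrad : ∀ (p : P) (x : M p), x ∈ rad p ↔ ∀ y, form p x y = 0)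
    (μ : P) (N : Submodule A (M μ)) : N ≤ rad μ ∨ N = ⊤ := by
  by_cases hN : N ≤ rad μ
  · exact Or.inl hN
  right
  obtain ⟨x, hxN, hxr⟩ := SetLike.not_le_iff_exists.1 hN
  obtain ⟨t, ht⟩ : ∃ t, form μ x (bas μ t) ≠ 0 := by
    by_contra h
    push_neg at h
    exact hxr ((mem_rad_iff hrad μ x).2 h)
  have hbasmem : ∀ s, bas μ s ∈ N := by
    intro s
    have h1 : c μ s t • x ∈ N := N.smul_mem _ hxN
    rw [cell_smul hb hτc hmul haction hform μ s t x] at h1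
    have h2 := smulF_mem N (form μ x (bas μ t))⁻¹ h1
    rwa [inv_smul_smul₀ ht] at h2
  rw [eq_top_iff]
  intro y _
  have hy : y ∈ Submodule.span F (Set.range (bas μ)) := by
    rw [(bas μ).span_eq]; trivial
  have hle : Submodule.span F (Set.range (bas μ)) ≤ N.restrictScalars F :=
    Submodule.span_le.2 (by rintro _ ⟨s, rfl⟩; exact hbasmem s)
  exact hle hy

lemma D_act (hb : ∀ (p : P) (s t : T p), b ⟨p, (s, t)⟩ = c p s t)
    (hτc : ∀ (p : P) (s t : T p), τ (c p s t) = c p t s)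
    (hmul : ∀ (p : P) (s t : T p) (a : A),
      c p s t * a - ∑ v, r p a t v • c p s v ∈
        Submodule.span F {x : A | ∃ q, p < q ∧ ∃ u v : T q, x = c q u v})
    (haction : ∀ (p : P) (a : A) (t : T p),
      a • bas p t = ∑ v, r p (τ a) t v • bas p v)
    (hform : ∀ (p : P) (u s t v : T p),
      c p u s * c p t v - (form p (bas p s) (bas p t)) • c p u v ∈
        Submodule.span F {x : A | ∃ q, p < q ∧ ∃ u' v' : T q, x = c q u' v'})
    (hrad : ∀ (p : P) (x : M p), x ∈ rad p ↔ ∀ y, form p x y = 0)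
    (μ : P) (hD : rad μ ≠ ⊤) :
    ∃ (s t : T μ) (z : M μ ⧸ rad μ), c μ s t • z ≠ 0 := by
  obtain ⟨x, hx⟩ : ∃ x, x ∉ rad μ := by
    by_contra h
    push_neg at h
    exact hD (Submodule.eq_top_iff'.2 h)
  obtain ⟨t, ht⟩ : ∃ t, form μ x (bas μ t) ≠ 0 := by
    by_contra h
    push_neg at h
    exact hx ((mem_rad_iff hrad μ x).2 h)
  obtain ⟨s, hs⟩ : ∃ s, form μ (bas μ s) (bas μ t) ≠ 0 := by
    by_contra h
    push_neg at h
    apply ht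
    have h0 : (form μ).flip (bas μ t) = 0 := (bas μ).ext fun s => by simpa using h s
    simpa using LinearMap.congr_fun h0 x
  refine ⟨s, t, Submodule.Quotient.mk (bas μ s), ?_⟩
  rw [← Submodule.Quotient.mk_smul, cell_smul hb hτc hmul haction hform μ s t,
    Ne, Submodule.Quotient.mk_eq_zero]
  intro hmem
  have h2 := smulF_mem (rad μ) (form μ (bas μ s) (bas μ t))⁻¹ hmem
  rw [inv_smul_smul₀ hs] at h2
  exact hs ((mem_rad_iff hrad μ (bas μ s)).1 h2 t)


lemma r_zero_of_not_le (hb : ∀ (p : P) (s t : T p), b ⟨p, (s, t)⟩ = c p s t)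
    (hτmul : ∀ a a' : A, τ (a * a') = τ a' * τ a)
    (hτc : ∀ (p : P) (s t : T p), τ (c p s t) = c p t s)
    (hmul : ∀ (p : P) (s t : T p) (a : A),
      c p s t * a - ∑ v, r p a t v • c p s v ∈
        Submodule.span F {x : A | ∃ q, p < q ∧ ∃ u v : T q, x = c q u v})
    {μ lam : P} (hlam : ¬ μ ≤ lam) (s t : T μ) (v w : T lam) :
    r lam (c μ t s) v w = 0 := by
  set SGe : Set A := {x : A | ∃ q, q ∈ {q | μ ≤ q} ∧ ∃ u v' : T q, x = c q u v'} with hSGe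
  have hX : c lam v v * c μ t s ∈ Submodule.span F SGe := by
    have hτX : τ (c lam v v * c μ t s) ∈ Submodule.span F SGe := by
      rw [hτmul, hτc, hτc]
      have h1 := hmul μ s t (c lam v v)
      have hrw : c μ s t * c lam v v
          = (c μ s t * c lam v v - ∑ w', r μ (c lam v v) t w' • c μ s w')
            + ∑ w', r μ (c lam v v) t w' • c μ s w' := by rw [sub_add_cancel]
      rw [hrw]
      refine Submodule.add_mem _ (Submodule.span_mono ?_ h1) (Submodule.sum_mem _ fun w' _ =>
        Submodule.smul_mem _ _ (Submodule.subset_span ⟨μ, le_refl μ, s, w', rfl⟩))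
      rintro x ⟨q, hq, u, v', rfl⟩
      exact ⟨q, le_of_lt hq, u, v', rfl⟩
    have := Submodule.mem_map_of_mem (f := τ) hτX
    rw [Submodule.map_span] at this
    rw [← tau_tau hb hτc (c lam v v * c μ t s)]
    refine Submodule.span_le.2 ?_ this
    rintro _ ⟨_, ⟨q, hq, u, v', rfl⟩, rfl⟩
    exact Submodule.subset_span ⟨q, hq, v', u, hτc q u v'⟩
  have h2 := hmul lam v v (c μ t s)
  have e1 := cell_repr_zero hb {q | μ ≤ q} hX hlam v w
  have e2 : b.repr (c lam v v * c μ t s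
      - ∑ w', r lam (c μ t s) v w' • c lam v w') ⟨lam, (v, w)⟩ = 0 :=
    cell_repr_zero hb {q | lam < q} h2 (lt_irrefl lam) v w
  rw [map_sub, Finsupp.sub_apply, e1, cell_repr_sum hb, zero_sub, neg_eq_zero] at e2
  exact e2

lemma ann_of_not_le (hb : ∀ (p : P) (s t : T p), b ⟨p, (s, t)⟩ = c p s t)
    (hτmul : ∀ a a' : A, τ (a * a') = τ a' * τ a)
    (hτc : ∀ (p : P) (s t : T p), τ (c p s t) = c p t s)
    (hmul : ∀ (p : P) (s t : T p) (a : A),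
      c p s t * a - ∑ v, r p a t v • c p s v ∈
        Submodule.span F {x : A | ∃ q, p < q ∧ ∃ u v : T q, x = c q u v})
    (haction : ∀ (p : P) (a : A) (t : T p),
      a • bas p t = ∑ v, r p (τ a) t v • bas p v)
    {μ lam : P} (hlam : ¬ μ ≤ lam) (s t : T μ) (x : M lam) :
    c μ s t • x = 0 := by
  have hmap : actL (c μ s t) lam = (0 : M lam →ₗ[F] M lam) := by
    apply (bas lam).ext
    intro v
    show c μ s t • bas lam v = 0
    rw [haction lam _ v, hτc]
    refine Finset.sum_eq_zero fun w _ => ?_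
    rw [r_zero_of_not_le hb hτmul hτc hmul hlam s t v w, zero_smul]
  simpa [actL] using LinearMap.congr_fun hmap x

end Aux

/-- For a cellular algebra A over a field F with cell datum (𝒫, T, C), cell modules M(p)
(with basis `bas p` indexed by T(p), cellular action rule and associative bilinear form), and
D(μ) = M(μ)/rad M(μ): if D(μ) ≠ 0 then every composition series of M(μ) has exactly one
factor isomorphic to D(μ) (i.e. [C^μ : D^μ] = 1), and any λ for which D(μ) occurs as a
subquotient (composition factor) of M(λ) satisfies λ ≥ μ. -/
theorem cellular_decomposition_triangular
    {F A P : Type*} [Field F] [Ring A] [Algebra F A] [PartialOrder P]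
    {T : P → Type*} [∀ p, Fintype (T p)]
    (c : ∀ p, T p → T p → A)
    (b : Module.Basis ((p : P) × (T p × T p)) F A)
    (hb : ∀ (p : P) (s t : T p), b ⟨p, (s, t)⟩ = c p s t)
    (τ : A →ₗ[F] A)
    (hτmul : ∀ a a' : A, τ (a * a') = τ a' * τ a)
    (hτc : ∀ (p : P) (s t : T p), τ (c p s t) = c p t s)
    (r : ∀ p : P, A → T p → T p → F)
    (hmul : ∀ (p : P) (s t : T p) (a : A),
      c p s t * a - ∑ v, r p a t v • c p s v ∈
        Submodule.span F {x : A | ∃ q, p < q ∧ ∃ u v : T q, x = c q u v})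
    (M : P → Type*) [∀ p, AddCommGroup (M p)] [∀ p, Module A (M p)]
    [∀ p, Module F (M p)] [∀ p, IsScalarTower F A (M p)]
    (bas : ∀ p, Module.Basis (T p) F (M p))
    (haction : ∀ (p : P) (a : A) (t : T p),
      a • bas p t = ∑ v, r p (τ a) t v • bas p v)
    (form : ∀ p, M p →ₗ[F] M p →ₗ[F] F)
    (hform : ∀ (p : P) (u s t v : T p),
      c p u s * c p t v - (form p (bas p s) (bas p t)) • c p u v ∈
        Submodule.span F {x : A | ∃ q, p < q ∧ ∃ u' v' : T q, x = c q u' v'})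
    (rad : ∀ p, Submodule A (M p))
    (hrad : ∀ (p : P) (x : M p), x ∈ rad p ↔ ∀ y, form p x y = 0)
    (μ : P) (hD : rad μ ≠ ⊤) :
    (∀ s : CompositionSeries (Submodule A (M μ)), s.head = ⊥ → s.last = ⊤ →
      Nat.card {i : Fin s.length //
        Nonempty ((↥(s i.succ) ⧸ Submodule.comap (s i.succ).subtype (s i.castSucc)) ≃ₗ[A]
          (M μ ⧸ rad μ))} = 1) ∧
    (∀ lam : P, ∀ N₁ N₂ : Submodule A (M lam), N₁ ≤ N₂ →
      Nonempty ((↥N₂ ⧸ Submodule.comap N₂.subtype N₁) ≃ₗ[A] (M μ ⧸ rad μ)) → μ ≤ lam) := by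
  obtain ⟨s₀, t₀, z, hz⟩ := D_act hb hτc hmul haction hform hrad μ hD
  constructor
  · intro s hhead hlast
    have hn : s.length ≠ 0 := by
      intro h0
      apply hD
      have hbt : (⊥ : Submodule A (M μ)) = ⊤ := by
        rw [← hhead, ← hlast]
        unfold RelSeries.head RelSeries.last
        congr 1
        ext
        simp [h0]
      exact top_unique (hbt ▸ bot_le)
    set i₀ : Fin s.length := ⟨s.length - 1, by omega⟩ with hi₀def
    have hi₀ : i₀.succ = Fin.last s.length := by
      ext
      simp only [Fin.val_succ, Fin.val_last, hi₀def]
      omega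
    have hsucc : s i₀.succ = ⊤ := by rw [hi₀]; exact hlast
    have hcov : s i₀.castSucc ⋖ s i₀.succ := s.step i₀
    have hKlt : s i₀.castSucc < ⊤ := by
      have := hcov.lt
      rwa [hsucc] at this
    have hKle : s i₀.castSucc ≤ rad μ :=
      Or.resolve_right (sub_le_rad_or_top hb hτc hmul haction hform hrad μ _) (ne_of_lt hKlt)
    have hKeq : s i₀.castSucc = rad μ := by
      rcases lt_or_eq_of_le hKle with h | h
      · exfalso
        have hcov' : s i₀.castSucc ⋖ ⊤ := by rwa [hsucc] at hcov
        exact hcov'.2 h (lt_top_iff_ne_top.2 hD)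
      · exact h
    have hP0 : Nonempty ((↥(s i₀.succ) ⧸ Submodule.comap (s i₀.succ).subtype (s i₀.castSucc))
        ≃ₗ[A] (M μ ⧸ rad μ)) := by
      refine ⟨Submodule.Quotient.equiv _ _
        ((LinearEquiv.ofEq _ _ hsucc).trans Submodule.topEquiv) ?_⟩
      rw [hKeq]
      apply le_antisymm
      · rw [Submodule.map_le_iff_le_comap]
        intro y hy
        exact hy
      · intro x hx
        exact Submodule.mem_map.2 ⟨⟨x, by rw [hsucc]; trivial⟩, hx, rfl⟩
    have huniq : ∀ i : Fin s.length,
        Nonempty ((↥(s i.succ) ⧸ Submodule.comap (s i.succ).subtype (s i.castSucc))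
          ≃ₗ[A] (M μ ⧸ rad μ)) → i = i₀ := by
      intro i hi
      by_contra hne
      have hlt : s i.succ < ⊤ := by
        have hlt' : i.succ < Fin.last s.length := by
          rw [Fin.lt_def]
          simp only [Fin.val_succ, Fin.val_last]
          have hne' : i.val ≠ s.length - 1 := fun h => hne (Fin.ext (by simpa [hi₀def] using h))
          omega
        have := s.strictMono hlt'
        rwa [show s (Fin.last s.length) = ⊤ from hlast] at this
      have hle : s i.succ ≤ rad μ :=
        Or.resolve_right (sub_le_rad_or_top hb hτc hmul haction hform hrad μ _) (ne_of_lt hlt)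
      refine no_iso (c μ s₀ t₀) ?_ hz hi
      intro x
      exact ann_subquotient _ _ _
        (fun y hy => rad_ann hb hτc hmul haction hform hrad μ s₀ t₀ (hle hy)) x
    haveI : Unique {i : Fin s.length //
        Nonempty ((↥(s i.succ) ⧸ Submodule.comap (s i.succ).subtype (s i.castSucc)) ≃ₗ[A]
          (M μ ⧸ rad μ))} :=
      { default := ⟨i₀, hP0⟩, uniq := fun j => Subtype.ext (huniq j j.2) }
    exact Nat.card_unique
  · intro lam N₁ N₂ hle12 hiso
    by_contra hlam
    refine no_iso (c μ s₀ t₀) ?_ hz hiso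
    intro x
    exact ann_subquotient N₂ N₁ _
      (fun y _ => ann_of_not_le hb hτmul hτc hmul haction hlam s₀ t₀ y) x
end

section
/- Let Γ_e be the cyclic quiver with vertex set I = ℤ/eℤ (e ≥ 2) and Cartan pairing (α_i, α_j) = 2δ_{ij} − δ_{i,j+1} − δ_{i,j−1} (with the convention (α_i,α_j) = 2δ_{ij} − 2δ_{i,j+1} when e = 2). For λ an ℓ-partition with multicharge κ and a standard tableau t with t = s·(r, r+1) for a standard tableau s, writing i_r, i_{r+1} ∈ I for the residues of r and r+1 in t, the Brundan–Kleshchev–Wang degree satisfies deg(t) = deg(s) − (α_{i_r}, α_{i_{r+1}}). -/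
/-- Nodes of an ℓ-multipartition: (component, row, column), all 0-indexed except the
component which is a `Fin ℓ`. -/
abbrev MNode (ℓ : ℕ) := Fin ℓ × ℕ × ℕ

/-- The shape after the first `k` steps of a chain of node additions: the (l, r) part counts
how many of the first `k` added nodes lie in component l, row r. -/
def shapeOf {ℓ : ℕ} (A : ℕ → MNode ℓ) (k : ℕ) : Fin ℓ → ℕ → ℕ := fun l r =>
  ((Finset.range k).filter fun j => (A j).1 = l ∧ (A j).2.1 = r).card

/-- The residue (mod e) of a node, for the multicharge κ : res(l, r, c) = κ_l + c − r. -/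
def resN (e : ℕ) {ℓ : ℕ} (κ : Fin ℓ → ℤ) (N : MNode ℓ) : ZMod e :=
  ((κ N.1 + (N.2.2 : ℤ) - (N.2.1 : ℤ) : ℤ) : ZMod e)

/-- N = (l, r, c) is an addable node of the multipartition μ. -/
def AddableNode {ℓ : ℕ} (μ : Fin ℓ → ℕ → ℕ) (N : MNode ℓ) : Prop :=
  N.2.2 = μ N.1 N.2.1 ∧ (N.2.1 = 0 ∨ μ N.1 N.2.1 < μ N.1 (N.2.1 - 1))

/-- N = (l, r, c) is a removable node of the multipartition μ. -/
def RemovableNode {ℓ : ℕ} (μ : Fin ℓ → ℕ → ℕ) (N : MNode ℓ) : Prop :=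
  N.2.2 + 1 = μ N.1 N.2.1 ∧ μ N.1 (N.2.1 + 1) ≤ N.2.2

/-- The fixed total (lexicographic) order on nodes. -/
def nodeLt {ℓ : ℕ} (a b : MNode ℓ) : Prop :=
  a.1 < b.1 ∨ (a.1 = b.1 ∧ (a.2.1 < b.2.1 ∨ (a.2.1 = b.2.1 ∧ a.2.2 < b.2.2)))

/-- d_A(μ) = #{addable nodes of μ of the same residue as A that are > A}
           − #{removable nodes of μ of the same residue as A that are > A}. -/
noncomputable def dA (e : ℕ) {ℓ : ℕ} (κ : Fin ℓ → ℤ) (μ : Fin ℓ → ℕ → ℕ) (N : MNode ℓ) : ℤ :=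
  ({B : MNode ℓ | AddableNode μ B ∧ resN e κ B = resN e κ N ∧ nodeLt N B}.ncard : ℤ) -
    ({B : MNode ℓ | RemovableNode μ B ∧ resN e κ B = resN e κ N ∧ nodeLt N B}.ncard : ℤ)

/-- The Brundan–Kleshchev–Wang degree of a standard tableau, encoded as the chain of nodes
A 0, A 1, …, A (n−1) added one at a time: deg = Σ_k d_{A k}(shape after step k+1). -/
noncomputable def degBKW (e : ℕ) {ℓ : ℕ} (κ : Fin ℓ → ℤ) (A : ℕ → MNode ℓ) (n : ℕ) : ℤ :=
  ∑ k ∈ Finset.range n, dA e κ (shapeOf A (k + 1)) (A k)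

/-- The Cartan pairing (α_i, α_j) = 2δ_{ij} − δ_{i,j+1} − δ_{i,j−1} for the cyclic quiver
with vertex set ℤ/eℤ (for e = 2 this gives 2δ_{ij} − 2δ_{i,j+1}). -/
def cartanPairing (e : ℕ) (i j : ZMod e) : ℤ :=
  (if i = j then 2 else 0) - (if i = j + 1 then 1 else 0) - (if i = j - 1 then 1 else 0)

/-- Partial sums defining the dominance order on ℓ-multipartitions (of at most n nodes). -/
def domWt (n : ℕ) {ℓ : ℕ} (μ : Fin ℓ → ℕ → ℕ) (l : Fin ℓ) (i : ℕ) : ℕ :=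
  (∑ l' ∈ Finset.univ.filter fun l' => l' < l, ∑ j ∈ Finset.range n, μ l' j) +
    ∑ j ∈ Finset.range (i + 1), μ l j

/-- μ dominates ν. -/
def Dominates (n : ℕ) {ℓ : ℕ} (μ ν : Fin ℓ → ℕ → ℕ) : Prop :=
  ∀ (l : Fin ℓ) (i : ℕ), domWt n ν l i ≤ domWt n μ l i

section DegSwapAux

variable {ℓ : ℕ}

instance (μ : Fin ℓ → ℕ → ℕ) (N : MNode ℓ) : Decidable (AddableNode μ N) := by
  unfold AddableNode; infer_instance

instance (μ : Fin ℓ → ℕ → ℕ) (N : MNode ℓ) : Decidable (RemovableNode μ N) := by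
  unfold RemovableNode; infer_instance

instance (a b : MNode ℓ) : Decidable (nodeLt a b) := by
  unfold nodeLt; infer_instance

/-- Add one node to a shape. -/
def addOne (μ : Fin ℓ → ℕ → ℕ) (A : MNode ℓ) : Fin ℓ → ℕ → ℕ :=
  fun l r => μ l r + if A.1 = l ∧ A.2.1 = r then 1 else 0

lemma addOne_of_ne {μ : Fin ℓ → ℕ → ℕ} {A : MNode ℓ} {l : Fin ℓ} {r : ℕ}
    (h : ¬(A.1 = l ∧ A.2.1 = r)) : addOne μ A l r = μ l r := by simp [addOne, h]

lemma le_addOne (μ : Fin ℓ → ℕ → ℕ) (A : MNode ℓ) (l : Fin ℓ) (r : ℕ) :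
    μ l r ≤ addOne μ A l r := Nat.le_add_right _ _

/-- The node which becomes addable (or ceases being removable), of residue `res A + 1`,
when the addable node `A` is added to `μ`. -/
def Pnode (μ : Fin ℓ → ℕ → ℕ) (A : MNode ℓ) : MNode ℓ :=
  if A.2.1 = 0 ∨ A.2.2 + 1 < μ A.1 (A.2.1 - 1) then (A.1, A.2.1, A.2.2 + 1)
  else (A.1, A.2.1 - 1, A.2.2)

/-- The node which becomes addable (or ceases being removable), of residue `res A - 1`,
when the addable node `A` is added to `μ`. -/
def Qnode (μ : Fin ℓ → ℕ → ℕ) (A : MNode ℓ) : MNode ℓ :=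
  if μ A.1 (A.2.1 + 1) = A.2.2 then (A.1, A.2.1 + 1, A.2.2)
  else (A.1, A.2.1, A.2.2 - 1)

lemma shapeOf_succ (A : ℕ → MNode ℓ) (k : ℕ) :
    shapeOf A (k + 1) = addOne (shapeOf A k) (A k) := by
  funext l r
  simp only [shapeOf, addOne, Finset.range_add_one, Finset.filter_insert]
  by_cases h : (A k).1 = l ∧ (A k).2.1 = r
  · rw [if_pos h, if_pos h, Finset.card_insert_of_notMem (by simp)]
  · rw [if_neg h, if_neg h, Nat.add_zero]

end DegSwapAux
section DegSwapAux2

variable {ℓ : ℕ}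

lemma shape_supp (A : ℕ → MNode ℓ) :
    ∀ k, (∀ j < k, AddableNode (shapeOf A j) (A j)) → ∀ l r, k ≤ r → shapeOf A k l r = 0 := by
  intro k
  induction k with
  | zero => intro _ l r _; simp [shapeOf]
  | succ k ih =>
    intro hc l r hr
    rw [shapeOf_succ]
    have h0 : shapeOf A k l r = 0 := ih (fun j hj => hc j (by omega)) l r (by omega)
    rw [addOne]
    rw [h0]
    have : ¬((A k).1 = l ∧ (A k).2.1 = r) := by
      rintro ⟨hl, hrow⟩
      have hadd := hc k (by omega)
      rcases hadd.2 with h | h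
      · omega
      · have : shapeOf A k (A k).1 ((A k).2.1 - 1) = 0 :=
          ih (fun j hj => hc j (by omega)) _ _ (by omega)
        omega
    rw [if_neg this]

lemma shape_part (A : ℕ → MNode ℓ) :
    ∀ k, (∀ j < k, AddableNode (shapeOf A j) (A j)) →
      ∀ l r, shapeOf A k l (r + 1) ≤ shapeOf A k l r := by
  intro k
  induction k with
  | zero => intro _ l r; simp [shapeOf]
  | succ k ih =>
    intro hc l r
    have hih := ih (fun j hj => hc j (by omega)) l r
    rw [shapeOf_succ]
    unfold addOne
    by_cases h1 : (A k).1 = l ∧ (A k).2.1 = r + 1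
    · have hadd := hc k (by omega)
      rcases hadd.2 with h | h
      · omega
      · rw [h1.1, h1.2] at h
        simp only [Nat.add_sub_cancel] at h
        have : ¬((A k).1 = l ∧ (A k).2.1 = r) := by rintro ⟨_, h'⟩; omega
        rw [if_pos h1, if_neg this]
        omega
    · rw [if_neg h1]
      split_ifs <;> omega

lemma shape_bnd (A : ℕ → MNode ℓ) (k : ℕ) (l : Fin ℓ) (r : ℕ) : shapeOf A k l r ≤ k := by
  calc ((Finset.range k).filter fun j => (A j).1 = l ∧ (A j).2.1 = r).card
      ≤ (Finset.range k).card := Finset.card_filter_le _ _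
    _ = k := Finset.card_range k

lemma addable_row_le {n : ℕ} {μ : Fin ℓ → ℕ → ℕ} (hsupp : ∀ l r, n ≤ r → μ l r = 0)
    {B : MNode ℓ} (hB : AddableNode μ B) : B.2.1 ≤ n := by
  rcases hB.2 with h | h
  · omega
  · by_contra hcon
    have : μ B.1 (B.2.1 - 1) = 0 := hsupp _ _ (by omega)
    omega

lemma addable_bounds {n : ℕ} {μ : Fin ℓ → ℕ → ℕ} (hsupp : ∀ l r, n ≤ r → μ l r = 0)
    (hbnd : ∀ l r, μ l r ≤ n) {B : MNode ℓ} (hB : AddableNode μ B) :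
    B.2.1 ≤ n ∧ B.2.2 ≤ n :=
  ⟨addable_row_le hsupp hB, hB.1 ▸ hbnd _ _⟩

lemma removable_bounds {n : ℕ} {μ : Fin ℓ → ℕ → ℕ} (hsupp : ∀ l r, n ≤ r → μ l r = 0)
    (hbnd : ∀ l r, μ l r ≤ n) {B : MNode ℓ} (hB : RemovableNode μ B) :
    B.2.1 < n ∧ B.2.2 < n := by
  obtain ⟨h1, _⟩ := hB
  constructor
  · by_contra hcon
    have : μ B.1 B.2.1 = 0 := hsupp _ _ (by omega)
    omega
  · have := hbnd B.1 B.2.1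
    omega

lemma ncard_pred {M : ℕ} {p : MNode ℓ → Prop} [DecidablePred p]
    (h : ∀ B, p B → B.2.1 < M ∧ B.2.2 < M) :
    {B : MNode ℓ | p B}.ncard
      = ((Finset.univ ×ˢ Finset.range M ×ˢ Finset.range M).filter p).card := by
  rw [← Set.ncard_coe_finset]
  congr 1
  ext B
  simp only [Finset.coe_filter, Set.mem_setOf_eq, Finset.mem_product, Finset.mem_univ,
    Finset.mem_range, true_and]
  constructor
  · intro hp; exact ⟨h B hp, hp⟩
  · exact fun h => h.2

lemma dA_eq_sum (e : ℕ) (κ : Fin ℓ → ℤ) (μ : Fin ℓ → ℕ → ℕ) (N : MNode ℓ) (M : ℕ)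
    (ha : ∀ B : MNode ℓ, AddableNode μ B → B.2.1 < M ∧ B.2.2 < M)
    (hr : ∀ B : MNode ℓ, RemovableNode μ B → B.2.1 < M ∧ B.2.2 < M) :
    dA e κ μ N = ∑ B ∈ Finset.univ ×ˢ Finset.range M ×ˢ Finset.range M,
      ((if AddableNode μ B ∧ resN e κ B = resN e κ N ∧ nodeLt N B then (1 : ℤ) else 0)
        - (if RemovableNode μ B ∧ resN e κ B = resN e κ N ∧ nodeLt N B then (1 : ℤ) else 0)) := by
  rw [Finset.sum_sub_distrib, dA]
  rw [ncard_pred (M := M) (fun B hB => ha B hB.1), ncard_pred (M := M) (fun B hB => hr B hB.1)]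
  rw [Finset.sum_boole, Finset.sum_boole]

end DegSwapAux2
section DegSwapAux3

variable {ℓ : ℕ}

lemma chiA {μ : Fin ℓ → ℕ → ℕ} (hpart : ∀ l r, μ l (r + 1) ≤ μ l r)
    {A : MNode ℓ} (hA : AddableNode μ A) (Y : Prop) [Decidable Y] :
    ((if AddableNode (addOne μ A) A ∧ Y then (1 : ℤ) else 0)
        - (if RemovableNode (addOne μ A) A ∧ Y then 1 else 0))
      - ((if AddableNode μ A ∧ Y then 1 else 0) - (if RemovableNode μ A ∧ Y then 1 else 0))
      = -(2 * if Y then 1 else 0) := by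
  obtain ⟨l, a, b⟩ := A
  have h1 : b = μ l a := hA.1
  have nA' : ¬ AddableNode (addOne μ (l, a, b)) (l, a, b) := by
    rintro ⟨h, -⟩
    simp [addOne] at h
    omega
  have hR' : RemovableNode (addOne μ (l, a, b)) (l, a, b) := by
    constructor
    · simp [addOne]; omega
    · show addOne μ (l, a, b) l (a + 1) ≤ b
      rw [addOne_of_ne (by simp)]
      have := hpart l a
      omega
  have nR : ¬ RemovableNode μ (l, a, b) := by
    rintro ⟨h, -⟩
    simp only at h
    omega
  simp only [hA, nA', hR', nR, true_and, false_and, if_false, if_true]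
  split_ifs <;> simp_all <;> ring

lemma res_P (e : ℕ) (κ : Fin ℓ → ℤ) {μ : Fin ℓ → ℕ → ℕ}
    {A : MNode ℓ} (hA : AddableNode μ A) :
    resN e κ (Pnode μ A) = resN e κ A + 1 := by
  obtain ⟨l, a, b⟩ := A
  rw [Pnode]
  split_ifs with hc
  · simp only [resN]
    push_cast
    ring
  · push_neg at hc
    have ha : a ≠ 0 := hc.1
    simp only [resN]
    push_cast [Nat.cast_sub (show 1 ≤ a by omega)]
    ring

lemma res_Q (e : ℕ) (κ : Fin ℓ → ℤ) {μ : Fin ℓ → ℕ → ℕ} (hpart : ∀ l r, μ l (r + 1) ≤ μ l r)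
    {A : MNode ℓ} (hA : AddableNode μ A) :
    resN e κ (Qnode μ A) = resN e κ A - 1 := by
  obtain ⟨l, a, b⟩ := A
  have h1 : b = μ l a := hA.1
  rw [Qnode]
  split_ifs with hc
  · simp only [resN]
    push_cast
    ring
  · have hb : 1 ≤ b := by
      have := hpart l a
      simp only at hc
      omega
    simp only [resN]
    push_cast [Nat.cast_sub hb]
    ring

end DegSwapAux3
section DegSwapAux4

variable {ℓ : ℕ}

lemma addable_def (μ : Fin ℓ → ℕ → ℕ) (l : Fin ℓ) (a b : ℕ) :
    AddableNode μ (l, a, b) ↔ (b = μ l a ∧ (a = 0 ∨ μ l a < μ l (a - 1))) := Iff.rfl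

lemma removable_def (μ : Fin ℓ → ℕ → ℕ) (l : Fin ℓ) (a b : ℕ) :
    RemovableNode μ (l, a, b) ↔ (b + 1 = μ l a ∧ μ l (a + 1) ≤ b) := Iff.rfl

lemma nodeLt_def (a1 b1 : Fin ℓ) (a2 a3 b2 b3 : ℕ) :
    nodeLt (a1, a2, a3) (b1, b2, b3)
      ↔ (a1 < b1 ∨ (a1 = b1 ∧ (a2 < b2 ∨ (a2 = b2 ∧ a3 < b3)))) := Iff.rfl

lemma addOne_at (μ : Fin ℓ → ℕ → ℕ) (l : Fin ℓ) (a b : ℕ) :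
    addOne μ (l, a, b) l a = μ l a + 1 := by simp [addOne]

lemma addOne_ne_row {μ : Fin ℓ → ℕ → ℕ} {l l' : Fin ℓ} {a b r : ℕ}
    (h : l ≠ l' ∨ a ≠ r) : addOne μ (l, a, b) l' r = μ l' r := by
  apply addOne_of_ne
  rintro ⟨h1, h2⟩
  simp only at h1 h2
  tauto

lemma Pnode_eq (μ : Fin ℓ → ℕ → ℕ) (l : Fin ℓ) (a b : ℕ) :
    Pnode μ (l, a, b)
      = if a = 0 ∨ b + 1 < μ l (a - 1) then (l, a, b + 1) else (l, a - 1, b) := rfl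

lemma Qnode_eq (μ : Fin ℓ → ℕ → ℕ) (l : Fin ℓ) (a b : ℕ) :
    Qnode μ (l, a, b)
      = if μ l (a + 1) = b then (l, a + 1, b) else (l, a, b - 1) := rfl

lemma chiP {μ : Fin ℓ → ℕ → ℕ} (hpart : ∀ l r, μ l (r + 1) ≤ μ l r)
    {A : MNode ℓ} (hA : AddableNode μ A) (Y : Prop) [Decidable Y] :
    ((if AddableNode (addOne μ A) (Pnode μ A) ∧ Y then (1 : ℤ) else 0)
        - (if RemovableNode (addOne μ A) (Pnode μ A) ∧ Y then 1 else 0))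
      - ((if AddableNode μ (Pnode μ A) ∧ Y then 1 else 0)
        - (if RemovableNode μ (Pnode μ A) ∧ Y then 1 else 0))
      = (if Y then 1 else 0) := by
  obtain ⟨l, a, b⟩ := A
  rw [addable_def] at hA
  obtain ⟨h1, h2⟩ := hA
  by_cases hc : a = 0 ∨ b + 1 < μ l (a - 1)
  · -- P = (l, a, b+1)
    rw [Pnode_eq, if_pos hc]
    have ha0 : a = 0 ∨ (a ≠ 0 ∧ b + 1 < μ l (a - 1)) := by
      rcases hc with hc | hc
      · exact Or.inl hc
      · by_cases h : a = 0
        · exfalso; rw [h] at hc h1; simp only [Nat.zero_sub] at hc; omega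
        · exact Or.inr ⟨h, hc⟩
    have hA' : AddableNode (addOne μ (l, a, b)) (l, a, b + 1) := by
      rw [addable_def, addOne_at]
      refine ⟨by omega, ?_⟩
      rcases ha0 with h | ⟨h, h'⟩
      · exact Or.inl h
      · refine Or.inr ?_
        have e1 : addOne μ (l, a, b) l (a - 1) = μ l (a - 1) :=
          addOne_ne_row (Or.inr (show a ≠ a - 1 by omega))
        rw [e1]
        omega
    have nA : ¬ AddableNode μ (l, a, b + 1) := by rw [addable_def]; omega
    have nR' : ¬ RemovableNode (addOne μ (l, a, b)) (l, a, b + 1) := by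
      rw [removable_def, addOne_at]; omega
    have nR : ¬ RemovableNode μ (l, a, b + 1) := by rw [removable_def]; omega
    simp only [hA', nA, nR', nR, true_and, false_and, if_false, if_true]
    split_ifs <;> ring
  · -- P = (l, a-1, b), with μ l (a-1) = b+1 and a ≥ 1
    rw [Pnode_eq, if_neg hc]
    push_neg at hc
    obtain ⟨ha, hle⟩ := hc
    have hlt : μ l a < μ l (a - 1) := by rcases h2 with h | h <;> omega
    have heq : μ l (a - 1) = b + 1 := by omega
    have ha1 : a - 1 + 1 = a := by omega
    have hv : addOne μ (l, a, b) l (a - 1) = μ l (a - 1) :=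
      addOne_ne_row (Or.inr (show a ≠ a - 1 by omega))
    have nA' : ¬ AddableNode (addOne μ (l, a, b)) (l, a - 1, b) := by
      rw [addable_def, hv]; omega
    have nA : ¬ AddableNode μ (l, a - 1, b) := by rw [addable_def]; omega
    have hR : RemovableNode μ (l, a - 1, b) := by rw [removable_def, ha1]; omega
    have nR' : ¬ RemovableNode (addOne μ (l, a, b)) (l, a - 1, b) := by
      rw [removable_def, ha1, hv, addOne_at]; omega
    simp only [nA', nA, hR, nR', true_and, false_and, if_false, if_true]
    split_ifs <;> ring

lemma chiQ {μ : Fin ℓ → ℕ → ℕ} (hpart : ∀ l r, μ l (r + 1) ≤ μ l r)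
    {A : MNode ℓ} (hA : AddableNode μ A) (Y : Prop) [Decidable Y] :
    ((if AddableNode (addOne μ A) (Qnode μ A) ∧ Y then (1 : ℤ) else 0)
        - (if RemovableNode (addOne μ A) (Qnode μ A) ∧ Y then 1 else 0))
      - ((if AddableNode μ (Qnode μ A) ∧ Y then 1 else 0)
        - (if RemovableNode μ (Qnode μ A) ∧ Y then 1 else 0))
      = (if Y then 1 else 0) := by
  obtain ⟨l, a, b⟩ := A
  rw [addable_def] at hA
  obtain ⟨h1, h2⟩ := hA
  by_cases hc : μ l (a + 1) = b
  · -- Q = (l, a+1, b) with μ l (a+1) = b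
    rw [Qnode_eq, if_pos hc]
    have hv : addOne μ (l, a, b) l (a + 1) = μ l (a + 1) :=
      addOne_ne_row (Or.inr (show a ≠ a + 1 by omega))
    have hA' : AddableNode (addOne μ (l, a, b)) (l, a + 1, b) := by
      rw [addable_def, hv, Nat.add_sub_cancel, addOne_at]
      omega
    have nA : ¬ AddableNode μ (l, a + 1, b) := by
      rw [addable_def, Nat.add_sub_cancel]; omega
    have nR' : ¬ RemovableNode (addOne μ (l, a, b)) (l, a + 1, b) := by
      rw [removable_def, hv]; omega
    have nR : ¬ RemovableNode μ (l, a + 1, b) := by rw [removable_def]; omega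
    simp only [hA', nA, nR', nR, true_and, false_and, if_false, if_true]
    split_ifs <;> ring
  · -- Q = (l, a, b-1) with μ l (a+1) < b
    rw [Qnode_eq, if_neg hc]
    have hlt : μ l (a + 1) < b := by have := hpart l a; omega
    have hb : 1 ≤ b := by omega
    have nA' : ¬ AddableNode (addOne μ (l, a, b)) (l, a, b - 1) := by
      rw [addable_def, addOne_at]; omega
    have nA : ¬ AddableNode μ (l, a, b - 1) := by rw [addable_def]; omega
    have hR : RemovableNode μ (l, a, b - 1) := by rw [removable_def]; omega
    have nR' : ¬ RemovableNode (addOne μ (l, a, b)) (l, a, b - 1) := by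
      rw [removable_def, addOne_at]; omega
    simp only [nA', nA, hR, nR', true_and, false_and, if_false, if_true]
    split_ifs <;> ring

end DegSwapAux4
section DegSwapAux5

variable {ℓ : ℕ}

lemma eq_node {l m : Fin ℓ} {a b u v : ℕ} (h1 : m = l) (h2 : u = a) (h3 : v = b) :
    (m, u, v) = (l, a, b) := by rw [h1, h2, h3]

lemma add_iff {μ : Fin ℓ → ℕ → ℕ} {A : MNode ℓ} (hA : AddableNode μ A)
    (B : MNode ℓ) (hne : B ≠ A) (hp : B ≠ Pnode μ A) (hq : B ≠ Qnode μ A) :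
    AddableNode (addOne μ A) B ↔ AddableNode μ B := by
  obtain ⟨l, a, b⟩ := A
  obtain ⟨m, u, v⟩ := B
  rw [addable_def] at hA
  obtain ⟨hb, h2⟩ := hA
  rw [addable_def, addable_def]
  constructor
  · rintro ⟨e1, e2⟩
    by_cases hml : l = m ∧ a = u
    · exfalso
      obtain ⟨rfl, rfl⟩ := hml
      rw [addOne_at] at e1
      have hcond : a = 0 ∨ b + 1 < μ l (a - 1) := by
        rcases e2 with h | h
        · exact Or.inl h
        · by_cases ha : a = 0
          · exact Or.inl ha
          · refine Or.inr ?_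
            rw [addOne_at, addOne_ne_row (Or.inr (show a ≠ a - 1 by omega))] at h
            omega
      have hPt : Pnode μ (l, a, b) = (l, a, b + 1) := by rw [Pnode_eq, if_pos hcond]
      exact hp (hPt ▸ eq_node rfl rfl (by omega))
    · have hv1 : addOne μ (l, a, b) m u = μ m u := by
        apply addOne_of_ne; rintro ⟨rfl, rfl⟩; exact hml ⟨rfl, rfl⟩
      rw [hv1] at e1 e2
      refine ⟨e1, ?_⟩
      by_cases hu0 : u = 0
      · exact Or.inl hu0
      rcases e2 with h | h
      · exact Or.inl h
      refine Or.inr ?_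
      by_cases hml2 : l = m ∧ u = a + 1
      · obtain ⟨rfl, rfl⟩ := hml2
        simp only [Nat.add_sub_cancel] at h ⊢
        rw [addOne_at] at h
        rcases Nat.lt_or_ge (μ l (a + 1)) (μ l a) with h' | h'
        · exact h'
        · exfalso
          have heq : μ l (a + 1) = b := by omega
          have hQt : Qnode μ (l, a, b) = (l, a + 1, b) := by rw [Qnode_eq, if_pos heq]
          exact hq (hQt ▸ eq_node rfl rfl (by omega))
      · rw [addOne_of_ne ?_] at h
        · exact h
        · rintro ⟨rfl, h3⟩
          simp only at h3
          exact hml2 ⟨rfl, by omega⟩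
  · rintro ⟨e1, e2⟩
    have hne' : ¬(l = m ∧ a = u) := by
      rintro ⟨rfl, rfl⟩
      exact hne (eq_node rfl rfl (by omega))
    have hv1 : addOne μ (l, a, b) m u = μ m u := by
      apply addOne_of_ne; rintro ⟨rfl, rfl⟩; exact hne' ⟨rfl, rfl⟩
    rw [hv1]
    refine ⟨e1, ?_⟩
    rcases e2 with h | h
    · exact Or.inl h
    · refine Or.inr ?_
      calc μ m u < μ m (u - 1) := h
        _ ≤ addOne μ (l, a, b) m (u - 1) := le_addOne _ _ _ _

lemma rem_iff {μ : Fin ℓ → ℕ → ℕ} {A : MNode ℓ} (hA : AddableNode μ A)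
    (B : MNode ℓ) (hne : B ≠ A) (hp : B ≠ Pnode μ A) (hq : B ≠ Qnode μ A) :
    RemovableNode (addOne μ A) B ↔ RemovableNode μ B := by
  obtain ⟨l, a, b⟩ := A
  obtain ⟨m, u, v⟩ := B
  rw [addable_def] at hA
  obtain ⟨hb, h2⟩ := hA
  rw [removable_def, removable_def]
  constructor
  · rintro ⟨e1, e2⟩
    by_cases hml : l = m ∧ a = u
    · exfalso
      obtain ⟨rfl, rfl⟩ := hml
      rw [addOne_at] at e1
      exact hne (eq_node rfl rfl (by omega))
    · have hv1 : addOne μ (l, a, b) m u = μ m u := by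
        apply addOne_of_ne; rintro ⟨rfl, rfl⟩; exact hml ⟨rfl, rfl⟩
      rw [hv1] at e1
      refine ⟨e1, ?_⟩
      calc μ m (u + 1) ≤ addOne μ (l, a, b) m (u + 1) := le_addOne _ _ _ _
        _ ≤ v := e2
  · rintro ⟨e1, e2⟩
    have hml : ¬(l = m ∧ a = u) := by
      rintro ⟨rfl, rfl⟩
      have hQt : Qnode μ (l, a, b) = (l, a, b - 1) := by
        rw [Qnode_eq, if_neg (show ¬ μ l (a + 1) = b by omega)]
      exact hq (hQt ▸ eq_node rfl rfl (by omega))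
    have hv1 : addOne μ (l, a, b) m u = μ m u := by
      apply addOne_of_ne; rintro ⟨rfl, rfl⟩; exact hml ⟨rfl, rfl⟩
    rw [hv1]
    refine ⟨e1, ?_⟩
    by_cases hml2 : l = m ∧ a = u + 1
    · obtain ⟨rfl, rfl⟩ := hml2
      rw [addOne_at]
      rcases Nat.lt_or_ge (μ l (u + 1)) v with h' | h'
      · omega
      · exfalso
        have hveq : v = μ l (u + 1) := by omega
        have hPt : Pnode μ (l, u + 1, b) = (l, u, b) := by
          rw [Pnode_eq, if_neg ?_]
          · simp [Nat.add_sub_cancel]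
          · push_neg
            refine ⟨by omega, ?_⟩
            rw [Nat.add_sub_cancel]
            omega
        exact hp (hPt ▸ eq_node rfl rfl (by omega))
    · rw [addOne_of_ne ?_]
      · exact e2
      · rintro ⟨rfl, h3⟩
        simp only at h3
        exact hml2 ⟨rfl, by omega⟩

end DegSwapAux5
section DegSwapAux6

variable {ℓ : ℕ}

lemma P_ne_A {μ : Fin ℓ → ℕ → ℕ} {A : MNode ℓ} (hA : AddableNode μ A) :
    Pnode μ A ≠ A := by
  obtain ⟨l, a, b⟩ := A
  rw [Pnode_eq]
  split_ifs with hc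
  · intro h; rw [Prod.ext_iff, Prod.ext_iff] at h; simp only at h; omega
  · intro h; rw [Prod.ext_iff, Prod.ext_iff] at h; simp only at h
    push_neg at hc; omega

lemma Q_ne_A {μ : Fin ℓ → ℕ → ℕ} (hpart : ∀ l r, μ l (r + 1) ≤ μ l r)
    {A : MNode ℓ} (hA : AddableNode μ A) : Qnode μ A ≠ A := by
  obtain ⟨l, a, b⟩ := A
  have h1 : b = μ l a := hA.1
  rw [Qnode_eq]
  split_ifs with hc
  · intro h; rw [Prod.ext_iff, Prod.ext_iff] at h; simp only at h; omega
  · intro h; rw [Prod.ext_iff, Prod.ext_iff] at h; simp only at h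
    have := hpart l a; omega

lemma P_ne_Q {μ : Fin ℓ → ℕ → ℕ} (hpart : ∀ l r, μ l (r + 1) ≤ μ l r)
    {A : MNode ℓ} (hA : AddableNode μ A) : Pnode μ A ≠ Qnode μ A := by
  obtain ⟨l, a, b⟩ := A
  have h1 : b = μ l a := hA.1
  rw [Qnode_eq, Pnode_eq]
  have hq : μ l (a + 1) ≠ b → 1 ≤ b := fun h => by have := hpart l a; omega
  split_ifs with hc1 hc2 hc2 <;>
    · intro h; rw [Prod.ext_iff, Prod.ext_iff] at h; simp only at h
      first
      | omega
      | (push_neg at hc1; omega)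
      | (have := hq hc2; push_neg at hc1; omega)

lemma addOne_supp {n : ℕ} {μ : Fin ℓ → ℕ → ℕ} (hsupp : ∀ l r, n ≤ r → μ l r = 0)
    {A : MNode ℓ} (hA : AddableNode μ A) :
    ∀ l r, n + 1 ≤ r → addOne μ A l r = 0 := by
  intro l r hr
  have hrow := addable_row_le hsupp hA
  rw [addOne_of_ne (by rintro ⟨-, h⟩; omega), hsupp l r (by omega)]

lemma addOne_bnd {n : ℕ} {μ : Fin ℓ → ℕ → ℕ} (hbnd : ∀ l r, μ l r ≤ n)
    (A : MNode ℓ) : ∀ l r, addOne μ A l r ≤ n + 1 := by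
  intro l r
  have := hbnd l r
  rw [addOne]
  split_ifs <;> omega

lemma dA_addOne (e n : ℕ) (κ : Fin ℓ → ℤ) {μ : Fin ℓ → ℕ → ℕ}
    (hpart : ∀ l r, μ l (r + 1) ≤ μ l r)
    (hsupp : ∀ l r, n ≤ r → μ l r = 0) (hbnd : ∀ l r, μ l r ≤ n)
    {A : MNode ℓ} (hA : AddableNode μ A) (N : MNode ℓ) :
    dA e κ (addOne μ A) N = dA e κ μ N
      + (if resN e κ N = resN e κ A + 1 ∧ nodeLt N (Pnode μ A) then 1 else 0)
      + (if resN e κ N = resN e κ A - 1 ∧ nodeLt N (Qnode μ A) then 1 else 0)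
      - (if resN e κ N = resN e κ A ∧ nodeLt N A then 2 else 0) := by
  classical
  set M := n + 2 with hM
  set box : Finset (MNode ℓ) := Finset.univ ×ˢ Finset.range M ×ˢ Finset.range M with hbox
  have hsupp' := addOne_supp hsupp hA
  have hbnd' := addOne_bnd (n := n) hbnd A
  have hb1 : ∀ B : MNode ℓ, AddableNode μ B → B.2.1 < M ∧ B.2.2 < M := by
    intro B hB; have := addable_bounds hsupp hbnd hB; omega
  have hb2 : ∀ B : MNode ℓ, RemovableNode μ B → B.2.1 < M ∧ B.2.2 < M := by
    intro B hB; have := removable_bounds hsupp hbnd hB; omega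
  have hb1' : ∀ B : MNode ℓ, AddableNode (addOne μ A) B → B.2.1 < M ∧ B.2.2 < M := by
    intro B hB; have := addable_bounds hsupp' hbnd' hB; omega
  have hb2' : ∀ B : MNode ℓ, RemovableNode (addOne μ A) B → B.2.1 < M ∧ B.2.2 < M := by
    intro B hB; have := removable_bounds hsupp' hbnd' hB; omega
  rw [dA_eq_sum e κ μ N M hb1 hb2, dA_eq_sum e κ (addOne μ A) N M hb1' hb2']
  -- membership of the three special nodes
  have hmem : ∀ B : MNode ℓ, B.2.1 < M ∧ B.2.2 < M → B ∈ box := by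
    intro B h
    rw [hbox]
    rw [Finset.mem_product, Finset.mem_product]
    exact ⟨Finset.mem_univ _, Finset.mem_range.2 h.1, Finset.mem_range.2 h.2⟩
  have hAmem : A ∈ box := by
    apply hmem; have := addable_bounds hsupp hbnd hA; omega
  have hPmem : Pnode μ A ∈ box := by
    apply hmem
    obtain ⟨l, a, b⟩ := A
    have hrow := addable_row_le hsupp hA
    have hb' : b = μ l a := hA.1
    have hcol : b ≤ n := by rw [hb']; exact hbnd l a
    simp only at hrow
    rw [Pnode_eq]
    split_ifs
    · exact ⟨show a < M by omega, show b + 1 < M by omega⟩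
    · exact ⟨show a - 1 < M by omega, show b < M by omega⟩
  have hQmem : Qnode μ A ∈ box := by
    apply hmem
    obtain ⟨l, a, b⟩ := A
    have hrow := addable_row_le hsupp hA
    have hb' : b = μ l a := hA.1
    have hcol : b ≤ n := by rw [hb']; exact hbnd l a
    simp only at hrow
    rw [Qnode_eq]
    split_ifs
    · exact ⟨show a + 1 < M by omega, show b < M by omega⟩
    · exact ⟨show a < M by omega, show b - 1 < M by omega⟩
  -- pointwise difference
  have key : ∀ B ∈ box,
      ((if AddableNode (addOne μ A) B ∧ resN e κ B = resN e κ N ∧ nodeLt N B then (1:ℤ) else 0)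
        - (if RemovableNode (addOne μ A) B ∧ resN e κ B = resN e κ N ∧ nodeLt N B then 1 else 0))
      - ((if AddableNode μ B ∧ resN e κ B = resN e κ N ∧ nodeLt N B then (1:ℤ) else 0)
        - (if RemovableNode μ B ∧ resN e κ B = resN e κ N ∧ nodeLt N B then 1 else 0))
      = (if B = Pnode μ A then (if resN e κ N = resN e κ A + 1 ∧ nodeLt N (Pnode μ A) then 1 else 0) else 0)
        + (if B = Qnode μ A then (if resN e κ N = resN e κ A - 1 ∧ nodeLt N (Qnode μ A) then 1 else 0) else 0)
        + (if B = A then -(2 * if resN e κ N = resN e κ A ∧ nodeLt N A then 1 else 0) else 0) := by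
    intro B _
    by_cases hBA : B = A
    · subst hBA
      rw [if_pos rfl, if_neg (P_ne_A hA).symm, if_neg (Q_ne_A hpart hA).symm]
      have hYA : (resN e κ B = resN e κ N ∧ nodeLt N B) ↔ (resN e κ N = resN e κ B ∧ nodeLt N B) := by
        rw [eq_comm]
      rw [show ((0:ℤ) + 0 + (-(2 * if resN e κ N = resN e κ B ∧ nodeLt N B then 1 else 0)))
            = -(2 * if resN e κ B = resN e κ N ∧ nodeLt N B then 1 else 0) by
          rw [if_congr hYA rfl rfl]; ring]
      exact chiA hpart hA _
    by_cases hBP : B = Pnode μ A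
    · subst hBP
      rw [if_pos rfl, if_neg (P_ne_Q hpart hA), if_neg (P_ne_A hA)]
      have hYP : (resN e κ (Pnode μ A) = resN e κ N ∧ nodeLt N (Pnode μ A))
          ↔ (resN e κ N = resN e κ A + 1 ∧ nodeLt N (Pnode μ A)) := by
        rw [res_P e κ hA, eq_comm]
      rw [show ((if resN e κ N = resN e κ A + 1 ∧ nodeLt N (Pnode μ A) then (1:ℤ) else 0) + 0 + 0)
            = (if resN e κ (Pnode μ A) = resN e κ N ∧ nodeLt N (Pnode μ A) then 1 else 0) by
          rw [if_congr hYP rfl rfl]; ring]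
      exact chiP hpart hA _
    by_cases hBQ : B = Qnode μ A
    · subst hBQ
      rw [if_pos rfl, if_neg hBP, if_neg hBA]
      have hYQ : (resN e κ (Qnode μ A) = resN e κ N ∧ nodeLt N (Qnode μ A))
          ↔ (resN e κ N = resN e κ A - 1 ∧ nodeLt N (Qnode μ A)) := by
        rw [res_Q e κ hpart hA, eq_comm]
      rw [show ((0:ℤ) + (if resN e κ N = resN e κ A - 1 ∧ nodeLt N (Qnode μ A) then (1:ℤ) else 0) + 0)
            = (if resN e κ (Qnode μ A) = resN e κ N ∧ nodeLt N (Qnode μ A) then 1 else 0) by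
          rw [if_congr hYQ rfl rfl]; ring]
      exact chiQ hpart hA _
    · rw [if_neg hBP, if_neg hBQ, if_neg hBA]
      rw [if_congr (and_congr_left' (add_iff hA B hBA hBP hBQ)) rfl rfl,
        if_congr (and_congr_left' (rem_iff hA B hBA hBP hBQ)) rfl rfl]
      ring
  have hsum := Finset.sum_congr rfl key
  rw [Finset.sum_add_distrib, Finset.sum_add_distrib,
    Finset.sum_ite_eq' box (Pnode μ A), Finset.sum_ite_eq' box (Qnode μ A),
    Finset.sum_ite_eq' box A, if_pos hAmem, if_pos hPmem, if_pos hQmem,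
    Finset.sum_sub_distrib] at hsum
  have h2if : (if resN e κ N = resN e κ A ∧ nodeLt N A then (2:ℤ) else 0)
      = 2 * (if resN e κ N = resN e κ A ∧ nodeLt N A then (1:ℤ) else 0) := by
    split_ifs <;> ring
  rw [h2if]
  linarith [hsum]

end DegSwapAux6
section DegSwapAux7

variable {ℓ : ℕ}

lemma domWt_addOne (n : ℕ) (μ : Fin ℓ → ℕ → ℕ) (X : MNode ℓ) (hX : X.2.1 < n)
    (l' : Fin ℓ) (i' : ℕ) :
    domWt n (addOne μ X) l' i'
      = domWt n μ l' i' + (if X.1 < l' ∨ (X.1 = l' ∧ X.2.1 ≤ i') then 1 else 0) := by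
  obtain ⟨x1, xr, xc⟩ := X
  simp only at hX
  have inner : ∀ (l'' : Fin ℓ) (m : ℕ),
      (∑ j ∈ Finset.range m, ((if (x1, xr, xc).1 = l'' ∧ (x1, xr, xc).2.1 = j then 1 else 0)))
        = if x1 = l'' ∧ xr < m then 1 else 0 := by
    intro l'' m
    by_cases h : x1 = l''
    · simp only [h, true_and]
      rw [Finset.sum_ite_eq (Finset.range m) xr (fun _ => 1)]
      simp [Finset.mem_range]
    · simp [h]
  unfold domWt addOne
  rw [Finset.sum_add_distrib]
  have houter : (∑ l'' ∈ Finset.univ.filter (fun l'' => l'' < l'),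
      ∑ j ∈ Finset.range n, (μ l'' j + if (x1, xr, xc).1 = l'' ∧ (x1, xr, xc).2.1 = j then 1 else 0))
      = (∑ l'' ∈ Finset.univ.filter (fun l'' => l'' < l'), ∑ j ∈ Finset.range n, μ l'' j)
        + if x1 < l' then 1 else 0 := by
    have : ∀ l'' ∈ Finset.univ.filter (fun l'' => l'' < l'),
        (∑ j ∈ Finset.range n, (μ l'' j + if (x1, xr, xc).1 = l'' ∧ (x1, xr, xc).2.1 = j then 1 else 0))
          = (∑ j ∈ Finset.range n, μ l'' j) + if x1 = l'' then 1 else 0 := by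
      intro l'' _
      rw [Finset.sum_add_distrib, inner l'' n]
      congr 1
      simp [hX]
    rw [Finset.sum_congr rfl this, Finset.sum_add_distrib]
    congr 1
    rw [Finset.sum_ite_eq (Finset.univ.filter (fun l'' => l'' < l')) x1 (fun _ => 1)]
    simp
  rw [houter, inner l' (i' + 1)]
  have : (xr ≤ i') = (xr < i' + 1) := by simp [Nat.lt_succ_iff]
  by_cases hp : x1 < l' <;> by_cases hq : x1 = l' ∧ xr ≤ i' <;>
    simp [hp, hq, Nat.lt_succ_iff] <;> omega

lemma one_ne_zero_zmod {e : ℕ} (he : 2 ≤ e) : (1 : ZMod e) ≠ 0 := by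
  intro h
  have h' : ((1 : ℕ) : ZMod e) = 0 := by exact_mod_cast h
  rw [ZMod.natCast_eq_zero_iff] at h'
  have := Nat.le_of_dvd one_pos h'
  omega

lemma nodeLt_of_lex {A B : MNode ℓ} (hlex : B.1 < A.1 ∨ (B.1 = A.1 ∧ B.2.1 < A.2.1)) :
    nodeLt B A := by
  obtain ⟨l, a, b⟩ := A
  obtain ⟨m, c, d⟩ := B
  simp only at hlex
  rw [nodeLt_def]
  rcases hlex with h | ⟨h, h'⟩
  · exact Or.inl h
  · exact Or.inr ⟨h, Or.inl h'⟩

lemma not_nodeLt_of_lex {A B : MNode ℓ} {m : Fin ℓ} {c : ℕ}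
    (hlex : B.1 < A.1 ∨ (B.1 = A.1 ∧ B.2.1 < A.2.1))
    (hX : ∀ X : MNode ℓ, X = B → m = X.1 ∧ c ≤ X.2.1) : True := trivial

lemma K1 {μ : Fin ℓ → ℕ → ℕ} {A B : MNode ℓ} (hA : AddableNode μ A)
    (hlex : B.1 < A.1 ∨ (B.1 = A.1 ∧ B.2.1 < A.2.1)) :
    nodeLt B (Pnode (addOne μ B) A) := by
  obtain ⟨l, a, b⟩ := A
  obtain ⟨m, c, d⟩ := B
  rw [addable_def] at hA
  obtain ⟨hb, h2⟩ := hA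
  simp only at hlex
  rw [Pnode_eq]
  split_ifs with hc
  · rw [nodeLt_def]
    rcases hlex with h | ⟨h, h'⟩
    · exact Or.inl h
    · exact Or.inr ⟨h, Or.inl h'⟩
  · push_neg at hc
    obtain ⟨ha0, hle⟩ := hc
    have hlt : μ l a < μ l (a - 1) := by rcases h2 with h | h <;> omega
    have hind : ¬((m, c, d).1 = l ∧ (m, c, d).2.1 = a - 1) := by
      rintro ⟨h1', h2'⟩
      simp only at h1' h2'
      rw [addOne, if_pos (by exact ⟨h1'.symm ▸ rfl, h2'⟩ : (m,c,d).1 = l ∧ (m,c,d).2.1 = a - 1)] at hle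
      omega
    rw [nodeLt_def]
    rcases hlex with h | ⟨h, h'⟩
    · exact Or.inl h
    · refine Or.inr ⟨h, Or.inl ?_⟩
      have : ¬(c = a - 1) := by
        intro hca
        exact hind ⟨by simp only; exact h ▸ rfl, by simpa using hca⟩
      omega

lemma K2 (ν : Fin ℓ → ℕ → ℕ) {A B : MNode ℓ}
    (hlex : B.1 < A.1 ∨ (B.1 = A.1 ∧ B.2.1 < A.2.1)) :
    nodeLt B (Qnode ν A) := by
  obtain ⟨l, a, b⟩ := A
  obtain ⟨m, c, d⟩ := B
  simp only at hlex
  rw [Qnode_eq]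
  split_ifs with hc <;> rw [nodeLt_def] <;>
    rcases hlex with h | ⟨h, h'⟩
  · exact Or.inl h
  · exact Or.inr ⟨h, Or.inl (by omega)⟩
  · exact Or.inl h
  · exact Or.inr ⟨h, Or.inl h'⟩

lemma K3 (ν : Fin ℓ → ℕ → ℕ) {A B : MNode ℓ}
    (hlex : B.1 < A.1 ∨ (B.1 = A.1 ∧ B.2.1 < A.2.1)) :
    ¬ nodeLt A (Pnode ν B) := by
  obtain ⟨l, a, b⟩ := A
  obtain ⟨m, c, d⟩ := B
  simp only at hlex
  rw [Pnode_eq]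
  split_ifs with hc <;> rw [nodeLt_def] <;> rintro (h | ⟨h, h' | ⟨h', -⟩⟩) <;>
    rcases hlex with g | ⟨g, g'⟩ <;>
      first
        | exact absurd h (by rw [g]; exact lt_irrefl _)
        | exact absurd h (lt_asymm g)
        | (rw [g] at h; exact absurd h (lt_irrefl _))
        | (rw [h] at g; exact absurd g (lt_irrefl _))
        | omega

lemma not_nodeLt_AB {A B : MNode ℓ}
    (hlex : B.1 < A.1 ∨ (B.1 = A.1 ∧ B.2.1 < A.2.1)) :
    ¬ nodeLt A B := by
  obtain ⟨l, a, b⟩ := A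
  obtain ⟨m, c, d⟩ := B
  simp only at hlex
  rw [nodeLt_def]
  rintro (h | ⟨h, h' | ⟨h', -⟩⟩) <;> rcases hlex with g | ⟨g, g'⟩ <;>
    first
      | exact absurd h (by rw [g]; exact lt_irrefl _)
      | exact absurd h (lt_asymm g)
      | (rw [g] at h; exact absurd h (lt_irrefl _))
      | (rw [h] at g; exact absurd g (lt_irrefl _))
      | omega

lemma K4 (e : ℕ) (he : 2 ≤ e) (κ : Fin ℓ → ℤ) {μ : Fin ℓ → ℕ → ℕ} {A B : MNode ℓ}
    (hA : AddableNode μ A)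
    (hres : resN e κ A = resN e κ B - 1)
    (hlex : B.1 < A.1 ∨ (B.1 = A.1 ∧ B.2.1 < A.2.1)) :
    ¬ nodeLt A (Qnode (addOne μ A) B) := by
  obtain ⟨l, a, b⟩ := A
  obtain ⟨m, c, d⟩ := B
  rw [addable_def] at hA
  obtain ⟨hb, h2⟩ := hA
  simp only at hlex
  rw [Qnode_eq]
  split_ifs with hc
  · rw [nodeLt_def]
    rintro (h | ⟨h, h' | ⟨h', hcol⟩⟩) <;> rcases hlex with g | ⟨g, g'⟩
    · exact absurd h (lt_asymm g)
    · rw [g] at h; exact absurd h (lt_irrefl _)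
    · rw [h] at g; exact absurd g (lt_irrefl _)
    · omega
    · rw [h] at g; exact absurd g (lt_irrefl _)
    · -- a = c + 1, same component: residue contradiction
      subst g
      have ha : a = c + 1 := h'
      subst ha
      rw [addOne, if_pos ⟨rfl, rfl⟩] at hc
      -- hc : μ l (c+1) + 1 = d, hb : b = μ l (c+1), so d = b + 1
      have hd : d = b + 1 := by omega
      subst hd
      rw [resN, resN] at hres
      simp only at hres
      apply one_ne_zero_zmod he
      have : ((1 : ℤ) : ZMod e) = 0 := by
        push_cast at hres ⊢
        linear_combination -hres
      exact_mod_cast this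
  · rw [nodeLt_def]
    rintro (h | ⟨h, h' | ⟨h', -⟩⟩) <;> rcases hlex with g | ⟨g, g'⟩ <;>
      first
        | exact absurd h (lt_asymm g)
        | (rw [g] at h; exact absurd h (lt_irrefl _))
        | (rw [h] at g; exact absurd g (lt_irrefl _))
        | omega

end DegSwapAux7
section DegSwapAux8

variable {ℓ : ℕ}

lemma shape_swap_eq {At As : ℕ → MNode ℓ} {n r : ℕ} (hr : 1 ≤ r) (hrn : r < n)
    (hagree : ∀ k < n, k ≠ r - 1 → k ≠ r → At k = As k)
    (h1 : At (r - 1) = As r) (h2 : At r = As (r - 1)) :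
    ∀ k ≤ n, k ≠ r → shapeOf At k = shapeOf As k := by
  intro k hkn hkr
  funext l w
  simp only [shapeOf]
  rw [Finset.card_filter, Finset.card_filter]
  rcases Nat.lt_or_ge k r with hk | hk
  · apply Finset.sum_congr rfl
    intro j hj
    rw [Finset.mem_range] at hj
    rw [hagree j (by omega) (by omega) (by omega)]
  · have hk' : r < k := by omega
    apply Finset.sum_equiv (Equiv.swap (r - 1) r)
    · intro j
      rw [Finset.mem_range, Finset.mem_range, Equiv.swap_apply_def]
      split_ifs <;> omega
    · intro j hj
      rw [Finset.mem_range] at hj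
      have : At j = As (Equiv.swap (r - 1) r j) := by
        by_cases hj1 : j = r - 1
        · rw [hj1, Equiv.swap_apply_left]; exact h1
        by_cases hj2 : j = r
        · rw [hj2, Equiv.swap_apply_right]; exact h2
        · rw [Equiv.swap_apply_of_ne_of_ne hj1 hj2]
          exact hagree j (by omega) hj1 hj2
      rw [this]

end DegSwapAux8
/-- If t = s·(r, r+1) where s, t are standard tableaux (encoded as chains of added nodes
`At`, `As`), the entries r and r+1 lie in different rows and columns of t, and s dominates t,
then deg(t) = deg(s) − (α_{i_r}, α_{i_{r+1}}), where i_r, i_{r+1} are the residues of r and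
r+1 in t. -/
theorem degree_swap (e n ℓ : ℕ) (he : 2 ≤ e) (hℓ : 0 < ℓ) (κ : Fin ℓ → ℤ)
    (At As : ℕ → MNode ℓ) (r : ℕ) (hr : 1 ≤ r) (hrn : r < n)
    (hct : ∀ k < n, AddableNode (shapeOf At k) (At k))
    (hcs : ∀ k < n, AddableNode (shapeOf As k) (As k))
    (hagree : ∀ k < n, k ≠ r - 1 → k ≠ r → At k = As k)
    (h1 : At (r - 1) = As r) (h2 : At r = As (r - 1))
    (hdiff : (At (r - 1)).1 ≠ (At r).1 ∨
      ((At (r - 1)).2.1 ≠ (At r).2.1 ∧ (At (r - 1)).2.2 ≠ (At r).2.2))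
    (hdom : Dominates n (shapeOf As r) (shapeOf At r)) :
    degBKW e κ At n =
      degBKW e κ As n - cartanPairing e (resN e κ (At (r - 1))) (resN e κ (At r)) := by
  classical
  set A : MNode ℓ := At (r - 1) with hAdef
  set B : MNode ℓ := At r with hBdef
  set μ0 : Fin ℓ → ℕ → ℕ := shapeOf At (r - 1) with hμ0
  have hshape := shape_swap_eq hr hrn hagree h1 h2
  have hAμ : AddableNode μ0 A := hct (r - 1) (by omega)
  have hs_r1 : shapeOf As (r - 1) = μ0 := (hshape (r - 1) (by omega) (by omega)).symm
  have hBμ : AddableNode μ0 B := by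
    have h := hcs (r - 1) (by omega)
    rw [hs_r1, ← h2] at h
    exact h
  have hνt : shapeOf At r = addOne μ0 A := by
    have h := shapeOf_succ At (r - 1)
    rwa [show r - 1 + 1 = r by omega] at h
  have hνs : shapeOf As r = addOne μ0 B := by
    have h := shapeOf_succ As (r - 1)
    rw [show r - 1 + 1 = r by omega, hs_r1, ← h2] at h
    exact h
  have hAνs : AddableNode (addOne μ0 B) A := by
    have h := hcs r hrn
    rwa [hνs, ← h1] at h
  have hBνt : AddableNode (addOne μ0 A) B := by
    have h := hct r hrn
    rwa [hνt] at h
  -- row bounds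
  have hμsupp2 : ∀ l w, r - 1 ≤ w → μ0 l w = 0 :=
    shape_supp At (r - 1) (fun j hj => hct j (by omega))
  have hArow : A.2.1 < n := by have := addable_row_le hμsupp2 hAμ; omega
  have hBrow : B.2.1 < n := by have := addable_row_le hμsupp2 hBμ; omega
  -- lexicographic comparison from dominance
  have hne2 : ¬(A.1 = B.1 ∧ A.2.1 = B.2.1) := by
    rintro ⟨hc1, hc2⟩
    rcases hdiff with h | h
    · exact h hc1
    · exact h.1 hc2
  have hlex : B.1 < A.1 ∨ (B.1 = A.1 ∧ B.2.1 < A.2.1) := by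
    by_contra hcon
    push_neg at hcon
    obtain ⟨hc1, hc2⟩ := hcon
    have hd := hdom A.1 A.2.1
    rw [hνt, hνs, domWt_addOne n μ0 A hArow A.1 A.2.1,
      domWt_addOne n μ0 B hBrow A.1 A.2.1] at hd
    rw [if_pos (Or.inr ⟨rfl, le_refl _⟩)] at hd
    rw [if_neg ?_] at hd
    · omega
    · rintro (h | ⟨h, h'⟩)
      · exact absurd h (not_lt.2 hc1)
      · have := hc2 h
        exact hne2 ⟨h.symm, by omega⟩
  have hBltA : nodeLt B A := nodeLt_of_lex hlex
  have hnAB : ¬ nodeLt A B := not_nodeLt_AB hlex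
  have hK1 : nodeLt B (Pnode (addOne μ0 B) A) := K1 hAμ hlex
  have hK2 : nodeLt B (Qnode (addOne μ0 B) A) := K2 _ hlex
  have hK3 : ¬ nodeLt A (Pnode (addOne μ0 A) B) := K3 _ hlex
  have hK4 : resN e κ A = resN e κ B - 1 → ¬ nodeLt A (Qnode (addOne μ0 A) B) :=
    fun h => K4 e he κ hAμ h hlex
  -- partition facts for the two middle shapes
  have hptAs : ∀ j < r, AddableNode (shapeOf As j) (As j) := fun j hj => hcs j (by omega)
  have hptAt : ∀ j < r, AddableNode (shapeOf At j) (At j) := fun j hj => hct j (by omega)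
  have hνs_part : ∀ l w, (addOne μ0 B) l (w + 1) ≤ (addOne μ0 B) l w := by
    have h := shape_part As r hptAs; rwa [hνs] at h
  have hνs_supp : ∀ l w, n ≤ w → (addOne μ0 B) l w = 0 := by
    have h := shape_supp As r hptAs; rw [hνs] at h
    exact fun l w hw => h l w (by omega)
  have hνs_bnd : ∀ l w, (addOne μ0 B) l w ≤ n := by
    intro l w; have h := shape_bnd As r l w; rw [hνs] at h; omega
  have hνt_part : ∀ l w, (addOne μ0 A) l (w + 1) ≤ (addOne μ0 A) l w := by
    have h := shape_part At r hptAt; rwa [hνt] at h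
  have hνt_supp : ∀ l w, n ≤ w → (addOne μ0 A) l w = 0 := by
    have h := shape_supp At r hptAt; rw [hνt] at h
    exact fun l w hw => h l w (by omega)
  have hνt_bnd : ∀ l w, (addOne μ0 A) l w ≤ n := by
    intro l w; have h := shape_bnd At r l w; rw [hνt] at h; omega
  -- split the sum
  have hsplit : degBKW e κ At n - degBKW e κ As n
      = (dA e κ (shapeOf At (r - 1 + 1)) (At (r - 1))
          - dA e κ (shapeOf As (r - 1 + 1)) (As (r - 1)))
        + (dA e κ (shapeOf At (r + 1)) (At r) - dA e κ (shapeOf As (r + 1)) (As r)) := by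
    unfold degBKW
    rw [← Finset.sum_sub_distrib]
    rw [← Finset.sum_subset (show ({r - 1, r} : Finset ℕ) ⊆ Finset.range n by
        intro x hx
        simp only [Finset.mem_insert, Finset.mem_singleton] at hx
        rw [Finset.mem_range]; omega) ?_]
    · rw [Finset.sum_pair (show r - 1 ≠ r by omega)]
    · intro x hx hnx
      simp only [Finset.mem_insert, Finset.mem_singleton, not_or] at hnx
      rw [Finset.mem_range] at hx
      rw [hagree x hx hnx.1 hnx.2, hshape (x + 1) (by omega) (by omega), sub_self]
  rw [show r - 1 + 1 = r by omega] at hsplit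
  have hsAt_r1 : shapeOf At (r + 1) = addOne (addOne μ0 B) A := by
    rw [hshape (r + 1) (by omega) (by omega), shapeOf_succ As r, hνs, ← h1]
  have hsAs_r1 : shapeOf As (r + 1) = addOne (addOne μ0 A) B := by
    rw [← hshape (r + 1) (by omega) (by omega), shapeOf_succ At r, hνt]
  rw [hνt, hνs, hsAt_r1, hsAs_r1, ← h1, ← h2] at hsplit
  rw [dA_addOne e n κ hνs_part hνs_supp hνs_bnd hAνs B,
    dA_addOne e n κ hνt_part hνt_supp hνt_bnd hBνt A] at hsplit
  -- evaluate the correction terms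
  rw [if_congr (and_iff_left hK1) rfl rfl, if_congr (and_iff_left hK2) rfl rfl,
    if_congr (and_iff_left hBltA) rfl rfl,
    if_neg (show ¬(resN e κ A = resN e κ B + 1 ∧ nodeLt A (Pnode (addOne μ0 A) B)) from
      fun h => hK3 h.2),
    if_neg (show ¬(resN e κ A = resN e κ B - 1 ∧ nodeLt A (Qnode (addOne μ0 A) B)) from
      fun h => hK4 h.1 h.2),
    if_neg (show ¬(resN e κ A = resN e κ B ∧ nodeLt A B) from fun h => hnAB h.2)] at hsplit
  have e2 : (resN e κ A = resN e κ B + 1) = (resN e κ B = resN e κ A - 1) := by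
    apply propext
    constructor
    · intro h; rw [h]; exact (add_sub_cancel_right _ _).symm
    · intro h; rw [h]; exact (sub_add_cancel _ _).symm
  have e3 : (resN e κ A = resN e κ B - 1) = (resN e κ B = resN e κ A + 1) := by
    apply propext
    constructor
    · intro h; rw [h]; exact (sub_add_cancel _ _).symm
    · intro h; rw [h]; exact (add_sub_cancel_right _ _).symm
  have e1 : (resN e κ A = resN e κ B) = (resN e κ B = resN e κ A) := propext eq_comm
  simp only [cartanPairing, e1, e2, e3]
  linarith [hsplit]
end
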